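/- arXiv:2411.16494 — 6 statements merged into one kernel-verified Lean document; each statement's English description precedes it below -/
import Mathlib

section
/- Let θ ∈ (-π/2,π/2), m ≥ 0. For every ψ ∈ C_c^∞(ℝ;ℂ⁴), applying the differential expression of H_θ twice yields the supersymmetric identity H_θ(H_θψ) = (S_θ + m²)ψ + iα₁α₂ψ, where S_θ acts componentwise on ψ and the matrix iα₁α₂ equals diag(-1, 1, -1, 1). -/
noncomputable section

open MeasureTheory Filter Complex
open scoped InnerProductSpace

/-- The state space `ℂ⁴`. -/
abbrev E4 : Type := EuclideanSpace ℂ (Fin 4)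

/-- The Hilbert space `L²(ℝ; ℂ⁴)`. -/
abbrev HS := Lp E4 2 (volume : Measure ℝ)

/-- Action of a `4 × 4` complex matrix on `ℂ⁴`. -/
def mvec (M : Matrix (Fin 4) (Fin 4) ℂ) (v : E4) : E4 :=
  (WithLp.equiv 2 (Fin 4 → ℂ)).symm (M.mulVec ((WithLp.equiv 2 (Fin 4 → ℂ)) v))

/-- The Dirac matrix `α₁ = [[0, σ₁], [σ₁, 0]]`. -/
def alpha1 : Matrix (Fin 4) (Fin 4) ℂ :=
  !![0, 0, 0, 1; 0, 0, 1, 0; 0, 1, 0, 0; 1, 0, 0, 0]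

/-- The Dirac matrix `α₂ = [[0, σ₂], [σ₂, 0]]`. -/
def alpha2 : Matrix (Fin 4) (Fin 4) ℂ :=
  !![0, 0, 0, -Complex.I; 0, 0, Complex.I, 0; 0, -Complex.I, 0, 0; Complex.I, 0, 0, 0]

/-- The Dirac matrix `α₃ = [[0, σ₃], [σ₃, 0]]`. -/
def alpha3 : Matrix (Fin 4) (Fin 4) ℂ :=
  !![0, 0, 1, 0; 0, 0, 0, -1; 1, 0, 0, 0; 0, -1, 0, 0]

/-- The Dirac matrix `α₀ = [[I₂, 0], [0, -I₂]]`. -/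
def alpha0 : Matrix (Fin 4) (Fin 4) ℂ :=
  !![1, 0, 0, 0; 0, 1, 0, 0; 0, 0, -1, 0; 0, 0, 0, -1]

/-- `g` is the distributional (weak) derivative of `f`. -/
def IsWeakDeriv {E : Type*} [NormedAddCommGroup E] [NormedSpace ℂ E]
    (f g : ℝ → E) : Prop :=
  ∀ φ : ℝ → ℂ, ContDiff ℝ (⊤ : ℕ∞) φ → HasCompactSupport φ →
    ∫ x : ℝ, deriv φ x • f x = - ∫ x : ℝ, φ x • g x

/-- Membership in `𝒟 = H¹(ℝ) ∩ L²(ℝ, x² dx)`. -/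
def MemFormDom {E : Type*} [NormedAddCommGroup E] [NormedSpace ℂ E]
    (f : ℝ → E) : Prop :=
  MemLp f 2 volume ∧ (∃ g, MemLp g 2 volume ∧ IsWeakDeriv f g) ∧
    MemLp (fun x : ℝ => (x : ℂ) • f x) 2 volume

/-- Membership in `D(S_θ) = H²(ℝ) ∩ L²(ℝ, x⁴ dx)`. -/
def MemSDom {E : Type*} [NormedAddCommGroup E] [NormedSpace ℂ E]
    (f : ℝ → E) : Prop :=
  MemLp f 2 volume ∧
    (∃ g h, IsWeakDeriv f g ∧ MemLp g 2 volume ∧ IsWeakDeriv g h ∧ MemLp h 2 volume) ∧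
    MemLp (fun x : ℝ => ((x : ℂ) ^ 2) • f x) 2 volume

/-- The graph of the rotated relativistic harmonic oscillator `H_θ` with mass `m`:
`InGraphH θ m ψ χ` holds iff `ψ ∈ D(H_θ) = 𝒟⁴` and
`χ = -i e^{-iθ/2} α₁ ψ' - e^{iθ/2} α₂ (xψ) + m α₃ ψ`. -/
def InGraphH (θ m : ℝ) (ψ χ : HS) : Prop :=
  MemFormDom (ψ : ℝ → E4) ∧
  ∃ g : ℝ → E4, IsWeakDeriv (ψ : ℝ → E4) g ∧
    (χ : ℝ → E4) =ᵐ[volume] fun x : ℝ =>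
      (-Complex.I * Complex.exp (-(θ / 2 : ℝ) * Complex.I)) • mvec alpha1 (g x)
        - Complex.exp ((θ / 2 : ℝ) * Complex.I) • mvec alpha2 ((x : ℂ) • ψ x)
        + (m : ℂ) • mvec alpha3 (ψ x)

/-- `R` is the (bounded, everywhere defined) inverse of `T - z`, where `T` is the operator
whose graph is the relation `Graph`. -/
def IsResolventOf (Graph : HS → HS → Prop) (z : ℂ) (R : HS →L[ℂ] HS) : Prop :=
  (∀ χ : HS, Graph (R χ) (χ + z • R χ)) ∧
  (∀ ψ χ : HS, Graph ψ χ → R (χ - z • ψ) = ψ)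

/-- `z` belongs to the resolvent set `ρ(H_θ)`. -/
def InResolventSetH (θ m : ℝ) (z : ℂ) : Prop :=
  ∃ R : HS →L[ℂ] HS, IsResolventOf (InGraphH θ m) z R

/-- `z` belongs to the `ε`-pseudospectrum `σ_ε(H_θ)` (with the convention `σ₀ = σ`). -/
def InPseudospectrumH (θ m ε : ℝ) (z : ℂ) : Prop :=
  ¬ InResolventSetH θ m z ∨
    (0 < ε ∧ ∃ R : HS →L[ℂ] HS, IsResolventOf (InGraphH θ m) z R ∧ 1 / ε < ‖R‖)


/-- Pointwise action of the differential expression of `H_θ`: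
`H_θψ = -i e^{-iθ/2} α₁ ψ' - e^{iθ/2} α₂ (xψ) + m α₃ ψ`. -/
def Hpt (θ m : ℝ) (ψ : ℝ → E4) : ℝ → E4 := fun x : ℝ =>
  (-Complex.I * Complex.exp (-(θ / 2 : ℝ) * Complex.I)) • mvec alpha1 (deriv ψ x)
    - Complex.exp ((θ / 2 : ℝ) * Complex.I) • mvec alpha2 ((x : ℂ) • ψ x)
    + (m : ℂ) • mvec alpha3 (ψ x)

/-- Pointwise (componentwise) action of the rotated harmonic oscillator
`S_θφ = -e^{-iθ} φ'' + e^{iθ} x² φ`. -/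
def Spt (θ : ℝ) (ψ : ℝ → E4) : ℝ → E4 := fun x : ℝ =>
  (-Complex.exp (-(θ : ℝ) * Complex.I)) • deriv (deriv ψ) x
    + (Complex.exp ((θ : ℝ) * Complex.I) * (x : ℂ) ^ 2) • ψ x

lemma mvec_add (M : Matrix (Fin 4) (Fin 4) ℂ) (u v : E4) :
    mvec M (u + v) = mvec M u + mvec M v := by
  ext i; simp [mvec, Matrix.mulVec_add]

lemma mvec_smul (M : Matrix (Fin 4) (Fin 4) ℂ) (c : ℂ) (v : E4) :
    mvec M (c • v) = c • mvec M v := by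
  ext i; simp [mvec, Matrix.mulVec_smul]

lemma mvec_mvec (M N : Matrix (Fin 4) (Fin 4) ℂ) (v : E4) :
    mvec M (mvec N v) = mvec (M * N) v := by
  ext i; simp [mvec, Matrix.mulVec_mulVec]

lemma mvec_neg (M : Matrix (Fin 4) (Fin 4) ℂ) (v : E4) :
    mvec (-M) v = -mvec M v := by
  ext i; simp [mvec, Matrix.neg_mulVec]

lemma mvec_one (v : E4) : mvec 1 v = v := by
  ext i; simp [mvec, Matrix.one_mulVec]

lemma mvec_Ismul (M : Matrix (Fin 4) (Fin 4) ℂ) (v : E4) :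
    mvec (Complex.I • M) v = Complex.I • mvec M v := by
  ext i; simp [mvec, Matrix.smul_mulVec]

lemma a11 : alpha1 * alpha1 = 1 := by
  ext i j; fin_cases i <;> fin_cases j <;>
    simp [alpha1, Matrix.mul_apply, Fin.sum_univ_four, Matrix.one_apply, Matrix.vecHead, Matrix.vecTail]

lemma a22 : alpha2 * alpha2 = 1 := by
  ext i j; fin_cases i <;> fin_cases j <;>
    simp [alpha2, Matrix.mul_apply, Fin.sum_univ_four, Matrix.one_apply, Matrix.vecHead, Matrix.vecTail]

lemma a33 : alpha3 * alpha3 = 1 := by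
  ext i j; fin_cases i <;> fin_cases j <;>
    simp [alpha3, Matrix.mul_apply, Fin.sum_univ_four, Matrix.one_apply, Matrix.vecHead, Matrix.vecTail]

lemma a21 : alpha2 * alpha1 = -(alpha1 * alpha2) := by
  ext i j; fin_cases i <;> fin_cases j <;>
    simp [alpha1, alpha2, Matrix.mul_apply, Fin.sum_univ_four, Matrix.vecHead, Matrix.vecTail]

lemma a31 : alpha3 * alpha1 = -(alpha1 * alpha3) := by
  ext i j; fin_cases i <;> fin_cases j <;>
    simp [alpha1, alpha3, Matrix.mul_apply, Fin.sum_univ_four, Matrix.vecHead, Matrix.vecTail]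

lemma a32 : alpha3 * alpha2 = -(alpha2 * alpha3) := by
  ext i j; fin_cases i <;> fin_cases j <;>
    simp [alpha2, alpha3, Matrix.mul_apply, Fin.sum_univ_four, Matrix.vecHead, Matrix.vecTail]

lemma adiag : Complex.I • (alpha1 * alpha2) = Matrix.diagonal ![-1, 1, -1, 1] := by
  ext i j; fin_cases i <;> fin_cases j <;>
    simp [alpha1, alpha2, Matrix.mul_apply, Fin.sum_univ_four, Matrix.diagonal, Matrix.vecHead, Matrix.vecTail]

lemma mvec_sub (M : Matrix (Fin 4) (Fin 4) ℂ) (u v : E4) :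
    mvec M (u - v) = mvec M u - mvec M v := by
  ext i; simp [mvec, Matrix.mulVec_sub]

/-- `mvec M` as a `ℂ`-linear map. -/
def mvecLin (M : Matrix (Fin 4) (Fin 4) ℂ) : E4 →ₗ[ℂ] E4 where
  toFun := mvec M
  map_add' := mvec_add M
  map_smul' c v := mvec_smul M c v

/-- `mvec M` as a continuous `ℂ`-linear map. -/
def mvecCLM (M : Matrix (Fin 4) (Fin 4) ℂ) : E4 →L[ℂ] E4 :=
  LinearMap.toContinuousLinearMap (mvecLin M)

lemma HasDerivAt.mvec_comp {f : ℝ → E4} {f' : E4} {x : ℝ}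
    (M : Matrix (Fin 4) (Fin 4) ℂ) (hf : HasDerivAt f f' x) :
    HasDerivAt (fun y => mvec M (f y)) (mvec M f') x :=
  (((mvecCLM M).restrictScalars ℝ).hasFDerivAt).comp_hasDerivAt x hf


/-- for every `ψ ∈ C_c^∞(ℝ; ℂ⁴)` one has the supersymmetric identity
`H_θ(H_θ ψ) = (S_θ + m²)ψ + i α₁ α₂ ψ`, and `iα₁α₂ = diag(-1, 1, -1, 1)`. -/
theorem Htheta_sq_eq_Stheta_add_msq (θ m : ℝ) (hθ : θ ∈ Set.Ioo (-(Real.pi / 2)) (Real.pi / 2))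
    (hm : 0 ≤ m) (ψ : ℝ → E4) (hψ : ContDiff ℝ (⊤ : ℕ∞) ψ) (hsupp : HasCompactSupport ψ) :
    (∀ x : ℝ, Hpt θ m (Hpt θ m ψ) x
        = Spt θ ψ x + ((m : ℂ) ^ 2) • ψ x + mvec (Complex.I • (alpha1 * alpha2)) (ψ x)) ∧
      Complex.I • (alpha1 * alpha2) = Matrix.diagonal ![-1, 1, -1, 1] := by
  refine ⟨fun x => ?_, adiag⟩
  have hψ1 : ContDiff ℝ (⊤ : ℕ∞) (deriv ψ) := by
    simpa using hψ.iterate_deriv 1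
  have hD : ∀ y : ℝ, HasDerivAt ψ (deriv ψ y) y := fun y =>
    ((hψ.differentiable (by simp)) y).hasDerivAt
  have hD2 : ∀ y : ℝ, HasDerivAt (deriv ψ) (deriv (deriv ψ) y) y := fun y =>
    ((hψ1.differentiable (by simp)) y).hasDerivAt
  have hofReal : ∀ y : ℝ, HasDerivAt (fun t : ℝ => (t : ℂ)) 1 y := fun y => by
    simpa using (hasDerivAt_id y).ofReal_comp
  have hxψ : ∀ y : ℝ, HasDerivAt (fun t : ℝ => (t : ℂ) • ψ t)
      ((y : ℂ) • deriv ψ y + ψ y) y := fun y => by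
    have := (hofReal y).smul (hD y); simp only [one_smul] at this; exact this
  have hH : HasDerivAt (Hpt θ m ψ)
      ((-Complex.I * Complex.exp (-(θ / 2 : ℝ) * Complex.I)) •
          mvec alpha1 (deriv (deriv ψ) x)
        - Complex.exp ((θ / 2 : ℝ) * Complex.I) •
            mvec alpha2 ((x : ℂ) • deriv ψ x + ψ x)
        + (m : ℂ) • mvec alpha3 (deriv ψ x)) x :=
    ((((hD2 x).mvec_comp alpha1).const_smul
          (-Complex.I * Complex.exp (-(θ / 2 : ℝ) * Complex.I))).sub
        (((hxψ x).mvec_comp alpha2).const_smul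
          (Complex.exp ((θ / 2 : ℝ) * Complex.I)))).add
      (((hD x).mvec_comp alpha3).const_smul (m : ℂ))
  have hder := hH.deriv
  simp only [Hpt, Spt]
  rw [hder]
  simp only [mvec_add, mvec_sub, mvec_smul, mvec_mvec, mvec_Ismul, smul_smul,
    a21, a31, a32, a11, a22, a33, mvec_neg, mvec_one, smul_neg]
  match_scalars
  all_goals push_cast
  all_goals ring_nf
  all_goals try (simp only [← Complex.exp_nat_mul, ← Complex.exp_add, Complex.I_sq]; push_cast; ring_nf)
  all_goals try (rw [mul_assoc, ← Complex.exp_add]; ring_nf; simp)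
end
end

section
/- Let θ ∈ (-π/2,π/2) and m ≥ 0. For every z ∈ ℂ, z belongs to the resolvent set ρ(H_θ) if and only if the complex conjugate z̄ belongs to the resolvent set ρ(H_{-θ}). -/
noncomputable section

open MeasureTheory Filter Complex
open scoped InnerProductSpace

/-! ### Auxiliary machinery: the conjugation `J v = α₃ (conj v)` and the induced map on `L²`. -/

/-- Componentwise complex conjugation on `ℂ⁴`. -/
def cvec (v : E4) : E4 :=
  (WithLp.equiv 2 (Fin 4 → ℂ)).symm fun i => starRingEnd ℂ ((WithLp.equiv 2 (Fin 4 → ℂ) v) i)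

/-- The antilinear conjugation `J v = α₃ (conj v)`. -/
def Jfun (v : E4) : E4 := mvec alpha3 (cvec v)

set_option linter.unreachableTactic false in
set_option linter.unusedTactic false in
lemma Jfun_add (v w : E4) : Jfun (v + w) = Jfun v + Jfun w := by
  ext i; fin_cases i <;>
  simp [Jfun, cvec, mvec, alpha3, Matrix.mulVec, dotProduct, Fin.sum_univ_four] <;> ring

set_option linter.unreachableTactic false in
set_option linter.unusedTactic false in
lemma Jfun_sub (v w : E4) : Jfun (v - w) = Jfun v - Jfun w := by
  ext i; fin_cases i <;>
  simp [Jfun, cvec, mvec, alpha3, Matrix.mulVec, dotProduct, Fin.sum_univ_four] <;> ring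

set_option linter.unreachableTactic false in
set_option linter.unusedTactic false in
lemma Jfun_smul (c : ℂ) (v : E4) : Jfun (c • v) = (starRingEnd ℂ c) • Jfun v := by
  ext i; fin_cases i <;>
  simp [Jfun, cvec, mvec, alpha3, Matrix.mulVec, dotProduct, Fin.sum_univ_four] <;> ring

lemma Jfun_real_smul (c : ℝ) (v : E4) : Jfun (c • v) = c • Jfun v := by
  have h1 : c • v = (c : ℂ) • v := by
    rw [← algebraMap_smul ℂ c v]; rfl
  have h2 : c • Jfun v = (c : ℂ) • Jfun v := by
    rw [← algebraMap_smul ℂ c (Jfun v)]; rfl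
  rw [h1, h2, Jfun_smul, Complex.conj_ofReal]

set_option linter.unreachableTactic false in
set_option linter.unusedTactic false in
lemma Jfun_Jfun (v : E4) : Jfun (Jfun v) = v := by
  ext i; fin_cases i <;>
  simp [Jfun, cvec, mvec, alpha3, Matrix.mulVec, dotProduct, Fin.sum_univ_four]

set_option linter.unreachableTactic false in
set_option linter.unusedTactic false in
lemma norm_Jfun (v : E4) : ‖Jfun v‖ = ‖v‖ := by
  rw [EuclideanSpace.norm_eq, EuclideanSpace.norm_eq]
  congr 1
  rw [Fin.sum_univ_four, Fin.sum_univ_four]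
  simp [Jfun, cvec, mvec, alpha3, Matrix.mulVec, dotProduct, Fin.sum_univ_four]
  ring

set_option linter.unreachableTactic false in
set_option linter.unusedTactic false in
lemma Jfun_alpha1 (v : E4) : Jfun (mvec alpha1 v) = -mvec alpha1 (Jfun v) := by
  ext i; fin_cases i <;>
  simp [Jfun, cvec, mvec, alpha1, alpha3, Matrix.mulVec, dotProduct, Fin.sum_univ_four]

set_option linter.unreachableTactic false in
set_option linter.unusedTactic false in
lemma Jfun_alpha2 (v : E4) : Jfun (mvec alpha2 v) = mvec alpha2 (Jfun v) := by
  ext i; fin_cases i <;>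
  simp [Jfun, cvec, mvec, alpha2, alpha3, Matrix.mulVec, dotProduct,
    Fin.sum_univ_four] <;> ring

set_option linter.unreachableTactic false in
set_option linter.unusedTactic false in
lemma Jfun_alpha3 (v : E4) : Jfun (mvec alpha3 v) = mvec alpha3 (Jfun v) := by
  ext i; fin_cases i <;>
  simp [Jfun, cvec, mvec, alpha3, Matrix.mulVec, dotProduct, Fin.sum_univ_four]

/-- The key pointwise intertwining identity `J ∘ (H_θ-symbol) = (H_{-θ}-symbol) ∘ J`. -/
lemma Jfun_key (θ m x : ℝ) (v w : E4) :
    Jfun ((-Complex.I * Complex.exp (-(θ / 2 : ℝ) * Complex.I)) • mvec alpha1 v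
        - Complex.exp ((θ / 2 : ℝ) * Complex.I) • mvec alpha2 ((x : ℂ) • w)
        + (m : ℂ) • mvec alpha3 w)
    = (-Complex.I * Complex.exp (-(-θ / 2 : ℝ) * Complex.I)) • mvec alpha1 (Jfun v)
        - Complex.exp ((-θ / 2 : ℝ) * Complex.I) • mvec alpha2 ((x : ℂ) • Jfun w)
        + (m : ℂ) • mvec alpha3 (Jfun w) := by
  have ha : starRingEnd ℂ (-Complex.I * Complex.exp (-(θ / 2 : ℝ) * Complex.I))
      = -(-Complex.I * Complex.exp (-(-θ / 2 : ℝ) * Complex.I)) := by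
    simp only [← Complex.exp_conj, map_mul, map_neg, Complex.conj_I, Complex.conj_ofReal]
    push_cast
    ring_nf
  have hb : starRingEnd ℂ (Complex.exp ((θ / 2 : ℝ) * Complex.I))
      = Complex.exp ((-θ / 2 : ℝ) * Complex.I) := by
    simp only [← Complex.exp_conj, map_mul, map_neg, Complex.conj_I, Complex.conj_ofReal]
    push_cast
    ring_nf
  rw [Jfun_add, Jfun_sub, Jfun_smul, Jfun_smul, Jfun_smul, Jfun_alpha1, Jfun_alpha2,
    Jfun_alpha3, Jfun_smul, ha, hb]
  simp only [Complex.conj_ofReal, neg_smul, smul_neg, neg_neg]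

/-- `J` as a real-linear isometry. -/
def Jli : E4 →ₗᵢ[ℝ] E4 :=
  { toFun := Jfun
    map_add' := Jfun_add
    map_smul' := Jfun_real_smul
    norm_map' := norm_Jfun }

/-- `J` as a real continuous linear map. -/
def Jclm : E4 →L[ℝ] E4 := Jli.toContinuousLinearMap

@[simp] lemma Jclm_apply (v : E4) : Jclm v = Jfun v := rfl
@[simp] lemma Jli_apply (v : E4) : Jli v = Jfun v := rfl

/-- The conjugation `C` on `L²(ℝ;ℂ⁴)`, `(Cψ)(x) = J (ψ x)`. -/
def Cmap : HS →L[ℝ] HS := Jclm.compLpL 2 volume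

lemma Cmap_coeFn (f : HS) : (Cmap f : ℝ → E4) =ᵐ[volume] fun x => Jfun (f x) :=
  Jclm.coeFn_compLpL f

lemma Cmap_smul (c : ℂ) (f : HS) : Cmap (c • f) = (starRingEnd ℂ c) • Cmap f := by
  apply Lp.ext
  filter_upwards [Cmap_coeFn (c • f), Lp.coeFn_smul c f,
    Lp.coeFn_smul (starRingEnd ℂ c) (Cmap f), Cmap_coeFn f] with x h1 h2 h3 h4
  rw [h1, h3, h2]
  simp only [Pi.smul_apply]
  rw [Jfun_smul, h4]

lemma Cmap_Cmap (f : HS) : Cmap (Cmap f) = f := by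
  apply Lp.ext
  filter_upwards [Cmap_coeFn (Cmap f), Cmap_coeFn f] with x h1 h2
  rw [h1, h2, Jfun_Jfun]

/-- Weak derivatives are preserved by the conjugation `J`. -/
lemma IsWeakDeriv.jfun {f g : ℝ → E4} (h : IsWeakDeriv f g) :
    IsWeakDeriv (fun x => Jfun (f x)) (fun x => Jfun (g x)) := by
  intro φ hφ hφc
  set φc : ℝ → ℂ := fun x => starRingEnd ℂ (φ x) with hφc_def
  have hsm : ContDiff ℝ (⊤ : ℕ∞) φc :=
    Complex.conjCLE.toContinuousLinearMap.contDiff.comp hφ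
  have hcs : HasCompactSupport φc := by
    apply HasCompactSupport.comp_left hφc
    simp [hφc_def]
  have hderiv : ∀ x, deriv φc x = starRingEnd ℂ (deriv φ x) := by
    intro x
    have hd : HasDerivAt φ (deriv φ x) x :=
      ((hφ.differentiable (by simp)) x).hasDerivAt
    exact hd.star.deriv
  have h2 := h φc hsm hcs
  have e1 : ∀ x, deriv φ x • Jfun (f x) = Jli (deriv φc x • f x) := by
    intro x
    rw [Jli_apply, Jfun_smul, hderiv x, Complex.conj_conj]
  have e2 : ∀ x, φ x • Jfun (g x) = Jli (φc x • g x) := by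
    intro x
    rw [Jli_apply, Jfun_smul, hφc_def, Complex.conj_conj]
  calc ∫ x : ℝ, deriv φ x • Jfun (f x)
      = ∫ x : ℝ, Jli (deriv φc x • f x) := by simp only [e1]
    _ = Jli (∫ x : ℝ, deriv φc x • f x) := Jli.integral_comp_comm _
    _ = Jli (-∫ x : ℝ, φc x • g x) := by rw [h2]
    _ = -Jli (∫ x : ℝ, φc x • g x) := by rw [map_neg]
    _ = -∫ x : ℝ, Jli (φc x • g x) := by rw [Jli.integral_comp_comm]
    _ = -∫ x : ℝ, φ x • Jfun (g x) := by simp only [e2]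

lemma IsWeakDeriv.congr_left {f f' g : ℝ → E4} (hf : f =ᵐ[volume] f')
    (h : IsWeakDeriv f g) : IsWeakDeriv f' g := by
  intro φ hφ hφc
  rw [← h φ hφ hφc]
  apply integral_congr_ae
  filter_upwards [hf] with x hx
  rw [hx]

/-- Transport of the graph of `H_θ` under the conjugation `C`. -/
lemma InGraphH.cmap {θ m : ℝ} {ψ χ : HS} (h : InGraphH θ m ψ χ) :
    InGraphH (-θ) m (Cmap ψ) (Cmap χ) := by
  obtain ⟨⟨hψ2, ⟨g0, hg0, hwd0⟩, hxψ⟩, g, hwd, hχ⟩ := h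
  have hCψ : (Cmap ψ : ℝ → E4) =ᵐ[volume] fun x => Jfun (ψ x) := Cmap_coeFn ψ
  refine ⟨⟨Lp.memLp _, ?_, ?_⟩, fun x => Jfun (g x), ?_, ?_⟩
  · refine ⟨fun x => Jfun (g0 x), ?_, (hwd0.jfun).congr_left hCψ.symm⟩
    exact (Jclm.comp_memLp' hg0)
  · have h1 : MemLp (fun x : ℝ => Jfun ((x : ℂ) • ψ x)) 2 volume :=
      Jclm.comp_memLp' hxψ
    apply h1.ae_eq
    filter_upwards [hCψ] with x hx
    rw [Jfun_smul, Complex.conj_ofReal, hx]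
  · exact (hwd.jfun).congr_left hCψ.symm
  · have hCχ : (Cmap χ : ℝ → E4) =ᵐ[volume] fun x => Jfun (χ x) := Cmap_coeFn χ
    filter_upwards [hCχ, hχ, hCψ] with x h1 h2 h3
    rw [h1, h2, Jfun_key θ m x (g x) (ψ x), h3]

/-- Transport of the resolvent set under conjugation. -/
lemma inResolventSetH_neg_conj {θ m : ℝ} {z : ℂ} (h : InResolventSetH θ m z) :
    InResolventSetH (-θ) m (starRingEnd ℂ z) := by
  obtain ⟨R, h1, h2⟩ := h
  refine ⟨{ toFun := fun χ => Cmap (R (Cmap χ))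
            map_add' := by intro a b; simp [map_add]
            map_smul' := by
              intro c χ
              simp only [RingHom.id_apply]
              rw [Cmap_smul, R.map_smul, Cmap_smul, Complex.conj_conj]
            cont := Cmap.continuous.comp (R.continuous.comp Cmap.continuous) }, ?_, ?_⟩
  · intro χ
    have hg := (h1 (Cmap χ)).cmap
    have : Cmap (Cmap χ + z • R (Cmap χ))
        = χ + starRingEnd ℂ z • Cmap (R (Cmap χ)) := by
      rw [map_add, Cmap_Cmap, Cmap_smul]
    rw [this] at hg
    exact hg
  · intro ψ χ hψχ
    have hg := hψχ.cmap
    rw [neg_neg] at hg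
    have h3 := h2 _ _ hg
    show Cmap (R (Cmap (χ - starRingEnd ℂ z • ψ))) = ψ
    have : Cmap (χ - starRingEnd ℂ z • ψ) = Cmap χ - z • Cmap ψ := by
      rw [map_sub, Cmap_smul, Complex.conj_conj]
    rw [this, h3, Cmap_Cmap]

/-- `z ∈ ρ(H_θ)` if and only if `z̄ ∈ ρ(H_{-θ})`. -/
theorem resolventSet_conj (θ m : ℝ) (hθ : θ ∈ Set.Ioo (-(Real.pi / 2)) (Real.pi / 2))
    (hm : 0 ≤ m) (z : ℂ) :
    InResolventSetH θ m z ↔ InResolventSetH (-θ) m (starRingEnd ℂ z) := by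
  constructor
  · exact inResolventSetH_neg_conj
  · intro h
    have h2 := inResolventSetH_neg_conj h
    rwa [neg_neg, Complex.conj_conj] at h2
end
end

section
/- Let θ ∈ (-π/2,π/2) and m ≥ 0. For every ε ≥ 0 and every z ∈ ℂ, z ∈ σ_ε(H_θ) if and only if -z ∈ σ_ε(H_θ). -/
noncomputable section

open MeasureTheory Filter Complex
open scoped InnerProductSpace

namespace PseudoSymmAux

/-! ### Basic `mvec` algebra -/

lemma mvec_mvec (M N : Matrix (Fin 4) (Fin 4) ℂ) (v : E4) :
    mvec M (mvec N v) = mvec (M * N) v := by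
  simp [mvec, Matrix.mulVec_mulVec]

lemma mvec_smul (M : Matrix (Fin 4) (Fin 4) ℂ) (c : ℂ) (v : E4) :
    mvec M (c • v) = c • mvec M v := by
  simp [mvec, Matrix.mulVec_smul]

lemma mvec_add (M : Matrix (Fin 4) (Fin 4) ℂ) (v w : E4) :
    mvec M (v + w) = mvec M v + mvec M w := by
  simp [mvec, Matrix.mulVec_add]

lemma mvec_negM (M : Matrix (Fin 4) (Fin 4) ℂ) (v : E4) :
    mvec (-M) v = -(mvec M v) := by
  simp [mvec, Matrix.neg_mulVec]

lemma mvec_one (v : E4) : mvec 1 v = v := by simp [mvec]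

/-! ### Matrix identities for `α₀` -/

lemma a00 : alpha0 * alpha0 = 1 := by
  ext i j; fin_cases i <;> fin_cases j <;>
    simp [alpha0, Matrix.mul_apply, Fin.sum_univ_four, Matrix.one_apply,
      Matrix.vecHead, Matrix.vecTail]

lemma a01 : alpha0 * alpha1 = -(alpha1 * alpha0) := by
  ext i j; fin_cases i <;> fin_cases j <;>
    simp [alpha0, alpha1, Matrix.mul_apply, Fin.sum_univ_four,
      Matrix.vecHead, Matrix.vecTail]

lemma a02 : alpha0 * alpha2 = -(alpha2 * alpha0) := by
  ext i j; fin_cases i <;> fin_cases j <;>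
    simp [alpha0, alpha2, Matrix.mul_apply, Fin.sum_univ_four,
      Matrix.vecHead, Matrix.vecTail]

lemma a03 : alpha0 * alpha3 = -(alpha3 * alpha0) := by
  ext i j; fin_cases i <;> fin_cases j <;>
    simp [alpha0, alpha3, Matrix.mul_apply, Fin.sum_univ_four,
      Matrix.vecHead, Matrix.vecTail]

lemma n00 : (-alpha0) * (-alpha0) = 1 := by rw [neg_mul_neg, a00]

/-! ### The multiplication operator on `E4` as a continuous linear equivalence -/

def mlin (M : Matrix (Fin 4) (Fin 4) ℂ) : E4 →ₗ[ℂ] E4 where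
  toFun := mvec M
  map_add' := mvec_add M
  map_smul' c v := mvec_smul M c v

def mequiv (M N : Matrix (Fin 4) (Fin 4) ℂ) (h1 : M * N = 1) (h2 : N * M = 1) :
    E4 ≃L[ℂ] E4 :=
  (LinearEquiv.ofLinear (mlin M) (mlin N)
    (LinearMap.ext fun v => by simp [mlin, mvec_mvec, h1, mvec_one])
    (LinearMap.ext fun v => by
      simp [mlin, mvec_mvec, h2, mvec_one])).toContinuousLinearEquiv

lemma mequiv_apply (M N : Matrix (Fin 4) (Fin 4) ℂ) (h1 : M * N = 1) (h2 : N * M = 1)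
    (v : E4) : mequiv M N h1 h2 v = mvec M v := rfl

/-! ### Conjugation preserves the domain conditions -/

lemma wd_congr {f f' g g' : ℝ → E4} (h : IsWeakDeriv f g)
    (hf : f =ᵐ[volume] f') (hg : g =ᵐ[volume] g') : IsWeakDeriv f' g' := by
  intro φ hφ hφc
  have h1 : (fun x => deriv φ x • f x) =ᵐ[volume] fun x => deriv φ x • f' x :=
    hf.mono fun x hx => by simp only [hx]
  have h2 : (fun x => φ x • g x) =ᵐ[volume] fun x => φ x • g' x :=
    hg.mono fun x hx => by simp only [hx]
  rw [← integral_congr_ae h1, ← integral_congr_ae h2]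
  exact h φ hφ hφc

lemma wd_clm (A : E4 ≃L[ℂ] E4) {f g : ℝ → E4} (h : IsWeakDeriv f g) :
    IsWeakDeriv (fun x => A (f x)) (fun x => A (g x)) := by
  intro φ hφ hφc
  have e1 : ∫ x : ℝ, deriv φ x • A (f x) = A (∫ x : ℝ, deriv φ x • f x) := by
    rw [← A.integral_comp_comm fun x => deriv φ x • f x]; simp only [_root_.map_smul]
  have e2 : ∫ x : ℝ, φ x • A (g x) = A (∫ x : ℝ, φ x • g x) := by
    rw [← A.integral_comp_comm fun x => φ x • g x]; simp only [_root_.map_smul]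
  rw [e1, e2, h φ hφ hφc, map_neg]

lemma memℒp_clm (A : E4 ≃L[ℂ] E4) {f : ℝ → E4} (hf : MemLp f 2 volume) :
    MemLp (fun x => A (f x)) 2 volume :=
  (A.toContinuousLinearMap.comp_memLp' hf : _)

lemma fd_congr {f f' : ℝ → E4} (h : MemFormDom f) (hf : f =ᵐ[volume] f') :
    MemFormDom f' := by
  obtain ⟨h1, ⟨g, hg, hwd⟩, h3⟩ := h
  exact ⟨h1.ae_eq hf, ⟨g, hg, wd_congr hwd hf EventuallyEq.rfl⟩,
    h3.ae_eq (hf.mono fun x hx => by simp only [hx])⟩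

lemma fd_clm (A : E4 ≃L[ℂ] E4) {f : ℝ → E4} (h : MemFormDom f) :
    MemFormDom (fun x => A (f x)) := by
  obtain ⟨h1, ⟨g, hg, hwd⟩, h3⟩ := h
  refine ⟨memℒp_clm A h1, ⟨fun x => A (g x), memℒp_clm A hg, wd_clm A hwd⟩, ?_⟩
  have h4 := memℒp_clm A h3
  exact h4.ae_eq (Filter.Eventually.of_forall fun x => _root_.map_smul A _ _)

/-! ### Conjugation of the graph -/

lemma key_alg (A : E4 ≃L[ℂ] E4)
    (h1 : ∀ v, A (mvec alpha1 v) = -(mvec alpha1 (A v)))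
    (h2 : ∀ v, A (mvec alpha2 v) = -(mvec alpha2 (A v)))
    (h3 : ∀ v, A (mvec alpha3 v) = -(mvec alpha3 (A v)))
    (c1 c2 cm : ℂ) (gx px : E4) (x : ℂ) :
    -(A (c1 • mvec alpha1 gx - c2 • mvec alpha2 (x • px) + cm • mvec alpha3 px))
      = c1 • mvec alpha1 (A gx) - c2 • mvec alpha2 (x • A px)
        + cm • mvec alpha3 (A px) := by
  simp only [map_add, map_sub, _root_.map_smul, h1, h2, h3]
  module

lemma graph_conj (θ m : ℝ) (A : E4 ≃L[ℂ] E4)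
    (h1 : ∀ v, A (mvec alpha1 v) = -(mvec alpha1 (A v)))
    (h2 : ∀ v, A (mvec alpha2 v) = -(mvec alpha2 (A v)))
    (h3 : ∀ v, A (mvec alpha3 v) = -(mvec alpha3 (A v)))
    (ψ χ : HS) (h : InGraphH θ m ψ χ) :
    InGraphH θ m (A.toContinuousLinearMap.compLpL 2 volume ψ)
      (-(A.toContinuousLinearMap.compLpL 2 volume χ)) := by
  obtain ⟨hdom, g, hwd, hae⟩ := h
  have hUψ : (A.toContinuousLinearMap.compLpL 2 volume ψ : ℝ → E4) =ᵐ[volume]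
      fun x => A (ψ x) := ContinuousLinearMap.coeFn_compLpL _ _
  have hUχ : (A.toContinuousLinearMap.compLpL 2 volume χ : ℝ → E4) =ᵐ[volume]
      fun x => A (χ x) := ContinuousLinearMap.coeFn_compLpL _ _
  refine ⟨fd_congr (fd_clm A hdom) hUψ.symm,
    fun x => A (g x), wd_congr (wd_clm A hwd) hUψ.symm EventuallyEq.rfl, ?_⟩
  have hneg : ((-(A.toContinuousLinearMap.compLpL 2 volume χ) : HS) : ℝ → E4)
      =ᵐ[volume] fun x => -((A.toContinuousLinearMap.compLpL 2 volume χ : HS) x) :=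
    Lp.coeFn_neg _
  filter_upwards [hneg, hUχ, hUψ, hae] with x e1 e2 e3 e4
  rw [e1, e2, e4, e3]
  exact key_alg A h1 h2 h3 _ _ _ _ _ _

/-! ### The unitaries `U₀ = α₀·` and `U₁ = -α₀·` on `HS` -/

def A0eq : E4 ≃L[ℂ] E4 := mequiv alpha0 alpha0 a00 a00
def A1eq : E4 ≃L[ℂ] E4 := mequiv (-alpha0) (-alpha0) n00 n00

def U0 : HS →L[ℂ] HS := A0eq.toContinuousLinearMap.compLpL 2 volume
def U1 : HS →L[ℂ] HS := A1eq.toContinuousLinearMap.compLpL 2 volume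

lemma coeFn_U0 (f : HS) : (U0 f : ℝ → E4) =ᵐ[volume] fun x => mvec alpha0 (f x) :=
  ContinuousLinearMap.coeFn_compLpL _ _

lemma coeFn_U1 (f : HS) : (U1 f : ℝ → E4) =ᵐ[volume] fun x => mvec (-alpha0) (f x) :=
  ContinuousLinearMap.coeFn_compLpL _ _

lemma U1_eq_neg_U0 (f : HS) : U1 f = -(U0 f) := by
  apply Lp.ext
  have h1 := coeFn_U1 f
  have h2 : ((-(U0 f) : HS) : ℝ → E4) =ᵐ[volume] fun x => -((U0 f : HS) x) :=
    Lp.coeFn_neg _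
  have h3 := coeFn_U0 f
  filter_upwards [h1, h2, h3] with x e1 e2 e3
  rw [e1, e2, e3, mvec_negM]

lemma U0_U0 (f : HS) : U0 (U0 f) = f := by
  apply Lp.ext
  filter_upwards [coeFn_U0 (U0 f), coeFn_U0 f] with x e1 e2
  rw [e1, e2, mvec_mvec, a00, mvec_one]

lemma U1_U1 (f : HS) : U1 (U1 f) = f := by
  rw [U1_eq_neg_U0 f, map_neg, U1_eq_neg_U0, neg_neg, U0_U0]

lemma norm_mvec_alpha0 (v : E4) : ‖mvec alpha0 v‖ = ‖v‖ := by
  rw [EuclideanSpace.norm_eq, EuclideanSpace.norm_eq]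
  congr 1
  simp [mvec, alpha0, Matrix.mulVec, dotProduct, Fin.sum_univ_four,
    Matrix.vecHead, Matrix.vecTail]

lemma norm_U0_le (f : HS) : ‖U0 f‖ ≤ ‖f‖ := by
  have h1 : ‖U0‖ ≤ 1 := by
    refine le_trans (ContinuousLinearMap.norm_compLpL_le _) ?_
    refine ContinuousLinearMap.opNorm_le_bound _ zero_le_one fun v => ?_
    rw [one_mul]
    exact le_of_eq (norm_mvec_alpha0 v)
  calc ‖U0 f‖ ≤ ‖U0‖ * ‖f‖ := U0.le_opNorm f
    _ ≤ 1 * ‖f‖ := mul_le_mul_of_nonneg_right h1 (norm_nonneg f)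
    _ = ‖f‖ := one_mul _

lemma norm_U1_le (f : HS) : ‖U1 f‖ ≤ ‖f‖ := by
  rw [U1_eq_neg_U0, norm_neg]; exact norm_U0_le f

/-! ### Anticommutation relations -/

lemma anti_gen (M : Matrix (Fin 4) (Fin 4) ℂ) (hM : alpha0 * M = -(M * alpha0)) (v : E4) :
    mvec alpha0 (mvec M v) = -(mvec M (mvec alpha0 v)) := by
  rw [mvec_mvec, mvec_mvec, hM, mvec_negM]

lemma anti_gen' (M : Matrix (Fin 4) (Fin 4) ℂ) (hM : alpha0 * M = -(M * alpha0)) (v : E4) :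
    mvec (-alpha0) (mvec M v) = -(mvec M (mvec (-alpha0) v)) := by
  rw [mvec_mvec, mvec_mvec,
    show -alpha0 * M = -(M * -alpha0) by rw [Matrix.neg_mul, Matrix.mul_neg, hM, neg_neg],
    mvec_negM]

lemma anti0_1 (v : E4) : A0eq (mvec alpha1 v) = -(mvec alpha1 (A0eq v)) := anti_gen _ a01 v
lemma anti0_2 (v : E4) : A0eq (mvec alpha2 v) = -(mvec alpha2 (A0eq v)) := anti_gen _ a02 v
lemma anti0_3 (v : E4) : A0eq (mvec alpha3 v) = -(mvec alpha3 (A0eq v)) := anti_gen _ a03 v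
lemma anti1_1 (v : E4) : A1eq (mvec alpha1 v) = -(mvec alpha1 (A1eq v)) := anti_gen' _ a01 v
lemma anti1_2 (v : E4) : A1eq (mvec alpha2 v) = -(mvec alpha2 (A1eq v)) := anti_gen' _ a02 v
lemma anti1_3 (v : E4) : A1eq (mvec alpha3 v) = -(mvec alpha3 (A1eq v)) := anti_gen' _ a03 v

lemma graph_conj0 (θ m : ℝ) (ψ χ : HS) (h : InGraphH θ m ψ χ) :
    InGraphH θ m (U0 ψ) (-(U0 χ)) :=
  graph_conj θ m A0eq anti0_1 anti0_2 anti0_3 ψ χ h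

lemma graph_conj1 (θ m : ℝ) (ψ χ : HS) (h : InGraphH θ m ψ χ) :
    InGraphH θ m (U1 ψ) (-(U1 χ)) :=
  graph_conj θ m A1eq anti1_1 anti1_2 anti1_3 ψ χ h

/-! ### The resolvent at `-z` -/

lemma resolvent_neg (θ m : ℝ) (z : ℂ) (R : HS →L[ℂ] HS)
    (h : IsResolventOf (InGraphH θ m) z R) :
    ∃ R' : HS →L[ℂ] HS, IsResolventOf (InGraphH θ m) (-z) R' ∧ ‖R'‖ = ‖R‖ := by
  obtain ⟨hfor, hback⟩ := h
  refine ⟨U1.comp (R.comp U0), ⟨?_, ?_⟩, ?_⟩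
  · intro χ
    have hc := graph_conj1 θ m _ _ (hfor (U0 χ))
    have e : -(U1 (U0 χ + z • R (U0 χ))) = χ + (-z) • (U1.comp (R.comp U0)) χ := by
      rw [map_add, _root_.map_smul, U1_eq_neg_U0 (U0 χ), U0_U0]
      show -(-χ + z • U1 (R (U0 χ))) = χ + (-z) • U1 (R (U0 χ))
      module
    rw [e] at hc
    exact hc
  · intro ψ χ hψχ
    have hc := graph_conj0 θ m ψ χ hψχ
    have hb := hback (U0 ψ) (-(U0 χ)) hc
    show U1 (R (U0 (χ - (-z) • ψ))) = ψ
    have e : U0 (χ - (-z) • ψ) = -(-(U0 χ) - z • U0 ψ) := by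
      rw [map_sub, _root_.map_smul]; module
    rw [e, map_neg, hb, map_neg, U1_eq_neg_U0, neg_neg, U0_U0]
  · refine le_antisymm (ContinuousLinearMap.opNorm_le_bound _ (norm_nonneg R) fun χ => ?_)
      (ContinuousLinearMap.opNorm_le_bound _ (norm_nonneg _) fun χ => ?_)
    · calc ‖(U1.comp (R.comp U0)) χ‖ = ‖U1 (R (U0 χ))‖ := rfl
        _ ≤ ‖R (U0 χ)‖ := norm_U1_le _
        _ ≤ ‖R‖ * ‖U0 χ‖ := R.le_opNorm _
        _ ≤ ‖R‖ * ‖χ‖ := mul_le_mul_of_nonneg_left (norm_U0_le χ) (norm_nonneg R)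
    · have e : R χ = U1 ((U1.comp (R.comp U0)) (U0 χ)) := by
        show R χ = U1 (U1 (R (U0 (U0 χ))))
        rw [U0_U0, U1_U1]
      rw [e]
      calc ‖U1 ((U1.comp (R.comp U0)) (U0 χ))‖ ≤ ‖(U1.comp (R.comp U0)) (U0 χ)‖ :=
            norm_U1_le _
        _ ≤ ‖U1.comp (R.comp U0)‖ * ‖U0 χ‖ := (U1.comp (R.comp U0)).le_opNorm _
        _ ≤ ‖U1.comp (R.comp U0)‖ * ‖χ‖ :=
            mul_le_mul_of_nonneg_left (norm_U0_le χ) (norm_nonneg _)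

lemma pseudo_mono (θ m ε : ℝ) (z : ℂ) (h : InPseudospectrumH θ m ε z) :
    InPseudospectrumH θ m ε (-z) := by
  rcases h with h | ⟨hε, R, hR, hn⟩
  · left
    rintro ⟨R', hR'⟩
    obtain ⟨R'', hR'', -⟩ := resolvent_neg θ m (-z) R' hR'
    rw [neg_neg] at hR''
    exact h ⟨R'', hR''⟩
  · right
    obtain ⟨R', hR', hnorm⟩ := resolvent_neg θ m z R hR
    exact ⟨hε, R', hR', by rw [hnorm]; exact hn⟩

end PseudoSymmAux

/-- for every `ε ≥ 0`, `z ∈ σ_ε(H_θ)` if and only if `-z ∈ σ_ε(H_θ)`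
(with the convention `σ₀ = σ`). -/
theorem pseudospectrum_symm (θ m : ℝ) (hθ : θ ∈ Set.Ioo (-(Real.pi / 2)) (Real.pi / 2))
    (hm : 0 ≤ m) (ε : ℝ) (hε : 0 ≤ ε) (z : ℂ) :
    InPseudospectrumH θ m ε z ↔ InPseudospectrumH θ m ε (-z) := by
  constructor
  · exact PseudoSymmAux.pseudo_mono θ m ε z
  · intro h
    have := PseudoSymmAux.pseudo_mono θ m ε (-z) h
    rwa [neg_neg] at this
end
end

section
/- Let θ ∈ (-π/2,π/2) and m ≥ 0. The families {χ^j_n} and {χ̃^j_n} are biorthonormal: for all integers n, n' ≥ 1 and all i, j ∈ {1,2,3,4}, the inner product (χ̃^i_n, χ^j_{n'}) equals δ_{ij}δ_{nn'}. -/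
noncomputable section

open MeasureTheory Filter Complex
open scoped InnerProductSpace

/-- The rotated Hermite function `φ_n(x) = h_n(e^{iθ/2} x)`, where `Hh n` is the entire
extension of the `n`-th Hermite function. -/
def phiFun (Hh : ℕ → ℂ → ℂ) (θ : ℝ) (n : ℕ) : ℝ → ℂ := fun x : ℝ =>
  Hh n (Complex.exp ((θ / 2 : ℝ) * Complex.I) * (x : ℂ))

/-- The four unnormalized vectors from which `u¹, u², u³, u⁴` are obtained. -/
def vRaw (m : ℝ) (n : ℕ) : Fin 4 → E4 :=
  ![(WithLp.equiv 2 (Fin 4 → ℂ)).symm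
      ![(Real.sqrt (2 * n) : ℂ), ((Real.sqrt (2 * n + m ^ 2) - m : ℝ) : ℂ),
        (Real.sqrt (2 * n) : ℂ), ((Real.sqrt (2 * n + m ^ 2) - m : ℝ) : ℂ)],
    (WithLp.equiv 2 (Fin 4 → ℂ)).symm
      ![-(Real.sqrt (2 * n) : ℂ), ((Real.sqrt (2 * n + m ^ 2) + m : ℝ) : ℂ),
        (Real.sqrt (2 * n) : ℂ), (-(Real.sqrt (2 * n + m ^ 2) + m : ℝ) : ℂ)],
    (WithLp.equiv 2 (Fin 4 → ℂ)).symm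
      ![-(Real.sqrt (2 * n) : ℂ), ((Real.sqrt (2 * n + m ^ 2) + m : ℝ) : ℂ),
        -(Real.sqrt (2 * n) : ℂ), ((Real.sqrt (2 * n + m ^ 2) + m : ℝ) : ℂ)],
    (WithLp.equiv 2 (Fin 4 → ℂ)).symm
      ![(Real.sqrt (2 * n) : ℂ), ((Real.sqrt (2 * n + m ^ 2) - m : ℝ) : ℂ),
        -(Real.sqrt (2 * n) : ℂ), ((-(Real.sqrt (2 * n + m ^ 2)) + m : ℝ) : ℂ)]]

/-- The unit vectors `u¹, u², u³, u⁴` in `ℂ⁴`. -/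
def uVec (m : ℝ) (n : ℕ) : Fin 4 → E4 := fun j => ((‖vRaw m n j‖ : ℝ) : ℂ)⁻¹ • vRaw m n j

/-- The `i`-th component of a vector in `ℂ⁴`. -/
def vcomp (v : E4) (i : Fin 4) : ℂ := (WithLp.equiv 2 (Fin 4 → ℂ)) v i

/-- The eigenfunction `χ^j_n = (u^j₁ φ_n, u^j₂ φ_{n-1}, u^j₃ φ_n, u^j₄ φ_{n-1})ᵀ`
(as a function `ℝ → ℂ⁴`); the functions `χ̃^j_n` are obtained replacing `θ` by `-θ`. -/
def chiFun (Hh : ℕ → ℂ → ℂ) (θ m : ℝ) (n : ℕ) (j : Fin 4) : ℝ → E4 := fun x : ℝ =>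
  (WithLp.equiv 2 (Fin 4 → ℂ)).symm
    ![vcomp (uVec m n j) 0 * phiFun Hh θ n x,
      vcomp (uVec m n j) 1 * phiFun Hh θ (n - 1) x,
      vcomp (uVec m n j) 2 * phiFun Hh θ n x,
      vcomp (uVec m n j) 3 * phiFun Hh θ (n - 1) x]


section Aux

lemma integ_mul_aux (f g : ℝ → ℂ) (hf : MemLp f 2 volume) (hg : MemLp g 2 volume) :
    Integrable (fun x => (starRingEnd ℂ) (f x) * g x) volume := by
  have hfc : MemLp (fun x => (starRingEnd ℂ) (f x)) 2 volume := by
    refine hf.congr_norm (RCLike.continuous_conj.comp_aestronglyMeasurable hf.1) ?_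
    filter_upwards with x; simp
  rw [← memLp_one_iff_integrable]
  have h := hg.smul (φ := fun x => (starRingEnd ℂ) (f x)) (p := 2) (q := 2) (r := 1)
    hfc
  exact h

lemma vRaw_inner_offdiag (m : ℝ) (hm : 0 ≤ m) (n : ℕ) (i j : Fin 4) (hij : i ≠ j) :
    ⟪vRaw m n i, vRaw m n j⟫_ℂ = 0 := by
  have h2n : (0:ℝ) ≤ 2 * n := by positivity
  have hs : ((Real.sqrt (2 * (n:ℝ)) : ℝ) : ℂ) ^ 2 = 2 * (n:ℂ) := by
    rw [← Complex.ofReal_pow, Real.sq_sqrt h2n]; push_cast; ring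
  have ha : ((Real.sqrt (2 * (n:ℝ) + m ^ 2) : ℝ) : ℂ) ^ 2 = 2 * (n:ℂ) + (m:ℂ) ^ 2 := by
    rw [← Complex.ofReal_pow, Real.sq_sqrt (by positivity)]; push_cast; ring
  fin_cases i <;> fin_cases j <;> (try exact absurd rfl hij) <;>
    · simp only [vRaw, PiLp.inner_apply, RCLike.inner_apply, Fin.sum_univ_four,
        Fin.reduceFinMk, Fin.isValue, WithLp.equiv_symm_apply, WithLp.ofLp_toLp,
        Matrix.cons_val_zero, Matrix.cons_val_one, Matrix.head_cons,
        Matrix.cons_val_two, Matrix.tail_cons, Matrix.cons_val_three,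
        map_neg, Complex.conj_ofReal]
      simp only [Complex.ofReal_sub, Complex.ofReal_add, Complex.ofReal_neg]
      first
        | ring1
        | linear_combination hs - ha
        | linear_combination ha - hs
        | linear_combination 2*hs - 2*ha
        | linear_combination 2*ha - 2*hs

lemma vRaw_ne_zero (m : ℝ) (n : ℕ) (hn : 1 ≤ n) (i : Fin 4) : vRaw m n i ≠ 0 := by
  intro h
  have h0 : Real.sqrt (2 * (n:ℝ)) ≠ 0 := by
    refine Real.sqrt_ne_zero'.mpr ?_
    have : (1:ℝ) ≤ (n:ℝ) := by exact_mod_cast hn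
    linarith
  have hc := congrArg (fun w => (WithLp.equiv 2 (Fin 4 → ℂ)) w 0) h
  fin_cases i <;>
    simp only [vRaw, Fin.reduceFinMk, Fin.isValue, Matrix.cons_val_zero, Matrix.cons_val_one,
      Matrix.head_cons, Matrix.cons_val_two, Matrix.tail_cons, Matrix.cons_val_three,
      WithLp.equiv_symm_apply, WithLp.ofLp_toLp, WithLp.equiv_apply, Pi.zero_apply, map_zero,
      neg_eq_zero, Complex.ofReal_eq_zero] at hc <;>
    simp at hc <;> omega

lemma uVec_inner (m : ℝ) (hm : 0 ≤ m) (n : ℕ) (hn : 1 ≤ n) (i j : Fin 4) :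
    ⟪uVec m n i, uVec m n j⟫_ℂ = if i = j then 1 else 0 := by
  rcases eq_or_ne i j with rfl | hij
  · have hnorm : ‖vRaw m n i‖ ≠ 0 := norm_ne_zero_iff.mpr (vRaw_ne_zero m n hn i)
    have hu : ‖uVec m n i‖ = 1 := by
      rw [uVec, norm_smul]
      simp only [norm_inv, Complex.norm_real, Real.norm_eq_abs,
        _root_.abs_of_nonneg (norm_nonneg _)]
      field_simp
    rw [if_pos rfl, inner_self_eq_norm_sq_to_K, hu]
    norm_num
  · simp only [if_neg hij, uVec, inner_smul_left, inner_smul_right,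
      vRaw_inner_offdiag m hm n i j hij, mul_zero]

end Aux

/-- the families `{χ^j_n}` and `{χ̃^j_n}` are biorthonormal:
`(χ̃^i_n, χ^j_{n'}) = δ_{ij} δ_{nn'}`.
The hypotheses state that `Hh n` is the entire extension of the `n`-th `L²`-normalized
Hermite function; `hmem` records `φ_n, φ̃_n ∈ L²` and `hbi` the biorthonormality
`(φ̃_p, φ_q) = δ_{pq}`. -/
theorem chi_biorthonormal (θ m : ℝ) (hθ : θ ∈ Set.Ioo (-(Real.pi / 2)) (Real.pi / 2))
    (hm : 0 ≤ m) (Hh : ℕ → ℂ → ℂ) (hent : ∀ n, Differentiable ℂ (Hh n))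
    (hODE : ∀ (n : ℕ) (t : ℂ),
      -(deriv (deriv (Hh n)) t) + t ^ 2 * Hh n t = (2 * (n : ℂ) + 1) * Hh n t)
    (e : ℕ → Lp ℂ 2 (volume : Measure ℝ))
    (he : ∀ n, (e n : ℝ → ℂ) =ᵐ[volume] fun x : ℝ => Hh n (x : ℂ))
    (horth : Orthonormal ℂ e)
    (hcomp : (Submodule.span ℂ (Set.range e)).topologicalClosure = ⊤)
    (hmem : ∀ n, MemLp (phiFun Hh θ n) 2 volume ∧ MemLp (phiFun Hh (-θ) n) 2 volume)
    (hbi : ∀ p q : ℕ, ∫ x : ℝ, (starRingEnd ℂ) (phiFun Hh (-θ) p x) * phiFun Hh θ q x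
      = if p = q then 1 else 0) :
    ∀ n n' : ℕ, 1 ≤ n → 1 ≤ n' → ∀ i j : Fin 4,
      ∫ x : ℝ, (⟪chiFun Hh (-θ) m n i x, chiFun Hh θ m n' j x⟫_ℂ)
        = if i = j ∧ n = n' then 1 else 0 := by
  intro n n' hn hn' i j
  set A : ℂ := (starRingEnd ℂ) (vcomp (uVec m n i) 0) * vcomp (uVec m n' j) 0
      + (starRingEnd ℂ) (vcomp (uVec m n i) 2) * vcomp (uVec m n' j) 2 with hA
  set B : ℂ := (starRingEnd ℂ) (vcomp (uVec m n i) 1) * vcomp (uVec m n' j) 1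
      + (starRingEnd ℂ) (vcomp (uVec m n i) 3) * vcomp (uVec m n' j) 3 with hB
  have hpt : ∀ x : ℝ, ⟪chiFun Hh (-θ) m n i x, chiFun Hh θ m n' j x⟫_ℂ
      = A * ((starRingEnd ℂ) (phiFun Hh (-θ) n x) * phiFun Hh θ n' x)
        + B * ((starRingEnd ℂ) (phiFun Hh (-θ) (n-1) x) * phiFun Hh θ (n'-1) x) := by
    intro x
    simp only [chiFun, PiLp.inner_apply, RCLike.inner_apply, Fin.sum_univ_four,
      WithLp.equiv_symm_apply, WithLp.ofLp_toLp, Matrix.cons_val_zero, Matrix.cons_val_one, Matrix.head_cons,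
      Matrix.cons_val_two, Matrix.tail_cons, Matrix.cons_val_three, map_mul, hA, hB]
    ring
  have hint1 : Integrable
      (fun x => (starRingEnd ℂ) (phiFun Hh (-θ) n x) * phiFun Hh θ n' x) volume :=
    integ_mul_aux _ _ (hmem n).2 (hmem n').1
  have hint2 : Integrable
      (fun x => (starRingEnd ℂ) (phiFun Hh (-θ) (n-1) x) * phiFun Hh θ (n'-1) x) volume :=
    integ_mul_aux _ _ (hmem (n-1)).2 (hmem (n'-1)).1
  calc ∫ x : ℝ, ⟪chiFun Hh (-θ) m n i x, chiFun Hh θ m n' j x⟫_ℂ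
      = ∫ x : ℝ, (A * ((starRingEnd ℂ) (phiFun Hh (-θ) n x) * phiFun Hh θ n' x)
          + B * ((starRingEnd ℂ) (phiFun Hh (-θ) (n-1) x) * phiFun Hh θ (n'-1) x)) := by
        exact integral_congr_ae (Filter.Eventually.of_forall hpt)
    _ = A * (∫ x : ℝ, (starRingEnd ℂ) (phiFun Hh (-θ) n x) * phiFun Hh θ n' x)
          + B * (∫ x : ℝ, (starRingEnd ℂ) (phiFun Hh (-θ) (n-1) x) * phiFun Hh θ (n'-1) x) := by
        rw [integral_add (hint1.const_mul A) (hint2.const_mul B),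
          MeasureTheory.integral_const_mul, MeasureTheory.integral_const_mul]
    _ = A * (if n = n' then 1 else 0) + B * (if n - 1 = n' - 1 then 1 else 0) := by
        rw [hbi n n', hbi (n-1) (n'-1)]
    _ = if i = j ∧ n = n' then 1 else 0 := by
        by_cases hnn : n = n'
        · subst hnn
          have hAB : A * 1 + B * 1 = ⟪uVec m n i, uVec m n j⟫_ℂ := by
            simp only [PiLp.inner_apply, RCLike.inner_apply, Fin.sum_univ_four, hA, hB,
              vcomp, WithLp.equiv_apply, mul_one]
            ring
          rw [if_pos rfl, if_pos rfl, hAB, uVec_inner m hm n hn i j]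
          simp
        · have h1 : n - 1 ≠ n' - 1 := by omega
          rw [if_neg hnn, if_neg h1, mul_zero, mul_zero, add_zero,
            if_neg (by tauto : ¬ (i = j ∧ n = n'))]
end
end

section
/- Let θ ∈ (-π/2,π/2) and m ≥ 0. For every integer n ≥ 1, the operator norms of the two spectral projectors coincide: ‖P_n^+‖ = ‖P_n^-‖. -/
noncomputable section

open MeasureTheory Filter Complex
open scoped InnerProductSpace

/-- The spectral projector `P_n^+ = χ¹_n(χ̃¹_n, ·) + χ²_n(χ̃²_n, ·)` on `L²(ℝ; ℂ⁴)`. -/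
def Pplus (Hh : ℕ → ℂ → ℂ) (θ m : ℝ)
    (hχ : ∀ (n : ℕ) (j : Fin 4), MemLp (chiFun Hh θ m n j) 2 volume)
    (hχt : ∀ (n : ℕ) (j : Fin 4), MemLp (chiFun Hh (-θ) m n j) 2 volume)
    (n : ℕ) : HS →L[ℂ] HS :=
  (innerSL ℂ ((hχt n 0).toLp (chiFun Hh (-θ) m n 0))).smulRight
      ((hχ n 0).toLp (chiFun Hh θ m n 0)) +
    (innerSL ℂ ((hχt n 1).toLp (chiFun Hh (-θ) m n 1))).smulRight
      ((hχ n 1).toLp (chiFun Hh θ m n 1))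

/-- The spectral projector `P_n^- = χ³_n(χ̃³_n, ·) + χ⁴_n(χ̃⁴_n, ·)` on `L²(ℝ; ℂ⁴)`. -/
def Pminus (Hh : ℕ → ℂ → ℂ) (θ m : ℝ)
    (hχ : ∀ (n : ℕ) (j : Fin 4), MemLp (chiFun Hh θ m n j) 2 volume)
    (hχt : ∀ (n : ℕ) (j : Fin 4), MemLp (chiFun Hh (-θ) m n j) 2 volume)
    (n : ℕ) : HS →L[ℂ] HS :=
  (innerSL ℂ ((hχt n 2).toLp (chiFun Hh (-θ) m n 2))).smulRight
      ((hχ n 2).toLp (chiFun Hh θ m n 2)) +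
    (innerSL ℂ ((hχt n 3).toLp (chiFun Hh (-θ) m n 3))).smulRight
      ((hχ n 3).toLp (chiFun Hh θ m n 3))

def auxSgn : Fin 4 → ℂ := ![1, 1, -1, -1]

def auxUL : E4 →L[ℂ] E4 :=
  LinearMap.toContinuousLinearMap
  { toFun := fun v => (WithLp.equiv 2 (Fin 4 → ℂ)).symm
      (fun i => auxSgn i * (WithLp.equiv 2 (Fin 4 → ℂ)) v i)
    map_add' := by
      intro v w
      apply (WithLp.equiv 2 (Fin 4 → ℂ)).injective
      funext i
      simp [mul_add]
    map_smul' := by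
      intro c v
      apply (WithLp.equiv 2 (Fin 4 → ℂ)).injective
      funext i
      simp [smul_eq_mul]
      ring }

lemma auxUL_apply (v : E4) (i : Fin 4) :
    (WithLp.equiv 2 (Fin 4 → ℂ)) (auxUL v) i = auxSgn i * (WithLp.equiv 2 (Fin 4 → ℂ)) v i := by
  rfl

lemma auxSgn_norm (i : Fin 4) : ‖auxSgn i‖ = 1 := by
  fin_cases i <;> simp [auxSgn]

lemma auxUL_norm (v : E4) : ‖auxUL v‖ = ‖v‖ := by
  rw [EuclideanSpace.norm_eq, EuclideanSpace.norm_eq]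
  congr 1
  apply Finset.sum_congr rfl
  intro i _
  have : (auxUL v) i = auxSgn i * (WithLp.equiv 2 (Fin 4 → ℂ)) v i := auxUL_apply v i
  rw [this, norm_mul, auxSgn_norm, one_mul]; rfl

lemma auxUL_invol (v : E4) : auxUL (auxUL v) = v := by
  apply (WithLp.equiv 2 (Fin 4 → ℂ)).injective
  funext i
  rw [auxUL_apply, auxUL_apply]
  fin_cases i <;> simp [auxSgn]

lemma auxUL_inner (a b : E4) : ⟪auxUL a, b⟫_ℂ = ⟪a, auxUL b⟫_ℂ := by
  rw [PiLp.inner_apply, PiLp.inner_apply]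
  apply Finset.sum_congr rfl
  intro i _
  have h1 : (auxUL a).ofLp i = auxSgn i * a.ofLp i := auxUL_apply a i
  have h2 : (auxUL b).ofLp i = auxSgn i * b.ofLp i := auxUL_apply b i
  rw [h1, h2]
  fin_cases i <;> simp [auxSgn]

def auxT : HS →L[ℂ] HS := auxUL.compLpL 2 volume

lemma auxT_coe (f : HS) : (auxT f : ℝ → E4) =ᵐ[volume] fun x => auxUL (f x) :=
  ContinuousLinearMap.coeFn_compLpL auxUL f

lemma auxT_norm_le : ‖auxT‖ ≤ 1 := by
  refine le_trans (ContinuousLinearMap.norm_compLpL_le auxUL) ?_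
  exact ContinuousLinearMap.opNorm_le_bound _ zero_le_one (fun v => by rw [auxUL_norm, one_mul])

lemma auxT_invol (f : HS) : auxT (auxT f) = f := by
  apply Lp.ext
  filter_upwards [auxT_coe (auxT f), auxT_coe f] with x h1 h2
  rw [h1, h2, auxUL_invol]

lemma auxT_inner (f g : HS) : ⟪auxT f, g⟫_ℂ = ⟪f, auxT g⟫_ℂ := by
  rw [L2.inner_def, L2.inner_def]
  apply integral_congr_ae
  filter_upwards [auxT_coe f, auxT_coe g] with x h1 h2
  rw [h1, h2, auxUL_inner]

lemma auxT_toLp {f g : ℝ → E4} (hf : MemLp f 2 volume) (hg : MemLp g 2 volume)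
    (h : ∀ x, g x = auxUL (f x)) : hg.toLp g = auxT (hf.toLp f) := by
  apply Lp.ext
  filter_upwards [hg.coeFn_toLp, auxT_coe (hf.toLp f), hf.coeFn_toLp] with x h1 h2 h3
  rw [h1, h2, h3, h]

lemma rankone_conj (a b : HS) :
    auxT ∘L ((innerSL ℂ a).smulRight b) ∘L auxT
      = (innerSL ℂ (auxT a)).smulRight (auxT b) := by
  ext1 f
  simp only [ContinuousLinearMap.coe_comp', Function.comp_apply,
    ContinuousLinearMap.smulRight_apply, innerSL_apply_apply, _root_.map_smul]
  rw [auxT_inner]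


lemma vRaw_norm_21 (m : ℝ) (n : ℕ) : ‖vRaw m n 2‖ = ‖vRaw m n 1‖ := by
  rw [EuclideanSpace.norm_eq, EuclideanSpace.norm_eq]
  congr 1
  simp [vRaw, Fin.sum_univ_four]
  rw [← norm_neg]
  congr 1
  ring

lemma vRaw_norm_30 (m : ℝ) (n : ℕ) : ‖vRaw m n 3‖ = ‖vRaw m n 0‖ := by
  rw [EuclideanSpace.norm_eq, EuclideanSpace.norm_eq]
  congr 1
  simp [vRaw, Fin.sum_univ_four]
  rw [← norm_neg]
  congr 1
  ring

lemma chi_21 (Hh : ℕ → ℂ → ℂ) (θ m : ℝ) (n : ℕ) (x : ℝ) :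
    chiFun Hh θ m n 2 x = auxUL (chiFun Hh θ m n 1 x) := by
  apply (WithLp.equiv 2 (Fin 4 → ℂ)).injective
  funext i
  rw [auxUL_apply]
  simp only [chiFun, Equiv.apply_symm_apply]
  have h := vRaw_norm_21 m n
  fin_cases i <;>
    · simp only [vcomp, uVec, h, WithLp.equiv_apply, WithLp.ofLp_smul, Pi.smul_apply, smul_eq_mul]
      simp [vRaw, auxSgn]
      try ring

lemma chi_30 (Hh : ℕ → ℂ → ℂ) (θ m : ℝ) (n : ℕ) (x : ℝ) :
    chiFun Hh θ m n 3 x = auxUL (chiFun Hh θ m n 0 x) := by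
  apply (WithLp.equiv 2 (Fin 4 → ℂ)).injective
  funext i
  rw [auxUL_apply]
  simp only [chiFun, Equiv.apply_symm_apply]
  have h := vRaw_norm_30 m n
  fin_cases i <;>
    · simp only [vcomp, uVec, h, WithLp.equiv_apply, WithLp.ofLp_smul, Pi.smul_apply, smul_eq_mul]
      simp [vRaw, auxSgn]
      try ring


/-- for every `n ≥ 1` the operator norms of the two spectral projectors
coincide: `‖P_n^+‖ = ‖P_n^-‖`. The hypotheses state that `Hh n` is the entire extension of
the `n`-th `L²`-normalized Hermite function and record membership of the eigenfunctions
in `L²`. -/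
theorem Pplus_norm_eq_Pminus_norm (θ m : ℝ)
    (hθ : θ ∈ Set.Ioo (-(Real.pi / 2)) (Real.pi / 2)) (hm : 0 ≤ m)
    (Hh : ℕ → ℂ → ℂ) (hent : ∀ n, Differentiable ℂ (Hh n))
    (hODE : ∀ (n : ℕ) (t : ℂ),
      -(deriv (deriv (Hh n)) t) + t ^ 2 * Hh n t = (2 * (n : ℂ) + 1) * Hh n t)
    (e : ℕ → Lp ℂ 2 (volume : Measure ℝ))
    (he : ∀ n, (e n : ℝ → ℂ) =ᵐ[volume] fun x : ℝ => Hh n (x : ℂ))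
    (horth : Orthonormal ℂ e)
    (hcomp : (Submodule.span ℂ (Set.range e)).topologicalClosure = ⊤)
    (hχ : ∀ (n : ℕ) (j : Fin 4), MemLp (chiFun Hh θ m n j) 2 volume)
    (hχt : ∀ (n : ℕ) (j : Fin 4), MemLp (chiFun Hh (-θ) m n j) 2 volume)
    (n : ℕ) (hn : 1 ≤ n) :
    ‖Pplus Hh θ m hχ hχt n‖ = ‖Pminus Hh θ m hχ hχt n‖ := by
  have e2 := auxT_toLp (hχ n 1) (hχ n 2) (chi_21 Hh θ m n)
  have e3 := auxT_toLp (hχ n 0) (hχ n 3) (chi_30 Hh θ m n)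
  have et2 := auxT_toLp (hχt n 1) (hχt n 2) (chi_21 Hh (-θ) m n)
  have et3 := auxT_toLp (hχt n 0) (hχt n 3) (chi_30 Hh (-θ) m n)
  have hle : ∀ A : HS →L[ℂ] HS, ‖auxT ∘L A ∘L auxT‖ ≤ ‖A‖ := by
    intro A
    calc ‖auxT ∘L A ∘L auxT‖ ≤ ‖auxT‖ * ‖A ∘L auxT‖ := ContinuousLinearMap.opNorm_comp_le _ _
      _ ≤ 1 * ‖A ∘L auxT‖ := mul_le_mul_of_nonneg_right auxT_norm_le (norm_nonneg _)
      _ = ‖A ∘L auxT‖ := one_mul _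
      _ ≤ ‖A‖ * ‖auxT‖ := ContinuousLinearMap.opNorm_comp_le _ _
      _ ≤ ‖A‖ * 1 := mul_le_mul_of_nonneg_left auxT_norm_le (norm_nonneg _)
      _ = ‖A‖ := mul_one _
  have key : Pminus Hh θ m hχ hχt n = auxT ∘L Pplus Hh θ m hχ hχt n ∘L auxT := by
    unfold Pminus Pplus
    rw [e2, e3, et2, et3, ← rankone_conj, ← rankone_conj]
    ext1 f
    simp only [ContinuousLinearMap.coe_comp', Function.comp_apply,
      ContinuousLinearMap.add_apply, map_add]
    rw [add_comm]
  have key2 : Pplus Hh θ m hχ hχt n = auxT ∘L Pminus Hh θ m hχ hχt n ∘L auxT := by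
    rw [key]
    ext1 f
    simp only [ContinuousLinearMap.coe_comp', Function.comp_apply]
    rw [auxT_invol, auxT_invol]
  refine le_antisymm ?_ ?_
  · rw [key2]; exact hle _
  · rw [key]; exact hle _
end
end

section
/- Let θ ∈ (-π/2,π/2) and m ≥ 0. Then for both choices of sign, lim_{n→∞} (log‖P_n^±‖)/n = log√((1 + |sin θ|)/(1 - |sin θ|)). In particular, if θ ≠ 0 the norms of the spectral projectors of H_θ grow exponentially in n. -/
noncomputable section

open MeasureTheory Filter Complex
open scoped InnerProductSpace

/-! ### Auxiliary lemmas for STATEMENT 16 -/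

lemma phi_norm_pos' (Hh : ℕ → ℂ → ℂ) (hent : ∀ n, Differentiable ℂ (Hh n))
    (e : ℕ → Lp ℂ 2 (volume : Measure ℝ))
    (he : ∀ n, (e n : ℝ → ℂ) =ᵐ[volume] fun x : ℝ => Hh n (x : ℂ))
    (horth : Orthonormal ℂ e) (θ : ℝ) (n : ℕ)
    (hmem : MemLp (phiFun Hh θ n) 2 volume) :
    0 < ‖hmem.toLp (phiFun Hh θ n)‖ := by
  rcases (norm_nonneg (hmem.toLp (phiFun Hh θ n))).lt_or_eq with h | h
  · exact h
  exfalso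
  have hLp0 : hmem.toLp (phiFun Hh θ n) = 0 := by
    rwa [← norm_eq_zero, eq_comm]
  have hae : phiFun Hh θ n =ᵐ[volume] 0 := by
    have := hmem.coeFn_toLp (p := 2) (μ := (volume : Measure ℝ))
    rw [hLp0] at this
    exact (this.symm.trans (Lp.coeFn_zero _ _ _))
  set c : ℂ := Complex.exp ((θ / 2 : ℝ) * Complex.I) with hc
  have hc0 : c ≠ 0 := Complex.exp_ne_zero _
  set F : ℂ → ℂ := fun z => Hh n (c * z) with hF
  have hFd : Differentiable ℂ F := (hent n).comp (differentiable_id.const_mul c)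
  have hcont : Continuous fun x : ℝ => F (x : ℂ) :=
    (hFd.continuous).comp Complex.continuous_ofReal
  have hZ : ∀ x : ℝ, F (x : ℂ) = 0 := by
    by_contra hne
    push_neg at hne
    obtain ⟨x₀, hx₀⟩ := hne
    have hopen : IsOpen {x : ℝ | F (x : ℂ) ≠ 0} :=
      isOpen_compl_iff.mpr (isClosed_eq hcont continuous_const)
    have hpos : 0 < volume {x : ℝ | F (x : ℂ) ≠ 0} :=
      IsOpen.measure_pos volume hopen ⟨x₀, hx₀⟩
    have hnull : volume {x : ℝ | F (x : ℂ) ≠ 0} = 0 := by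
      have : ∀ᵐ x : ℝ ∂volume, F (x : ℂ) = 0 := by
        filter_upwards [hae] with x hx
        exact hx
      simpa [ae_iff] using this
    exact hpos.ne' hnull
  have hFan : AnalyticOnNhd ℂ F Set.univ := fun z _ => hFd.analyticAt z
  have hfreq : ∃ᶠ z in nhdsWithin (0 : ℂ) {(0 : ℂ)}ᶜ, F z = 0 := by
    have htend : Filter.Tendsto (fun k : ℕ => ((1 / ((k : ℝ) + 1) : ℝ) : ℂ)) atTop
        (nhdsWithin (0 : ℂ) {(0 : ℂ)}ᶜ) := by
      apply tendsto_nhdsWithin_of_tendsto_nhds_of_eventually_within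
      · have h2 : Filter.Tendsto (fun k : ℕ => ((1 / ((k : ℝ) + 1) : ℝ) : ℂ)) atTop
            (nhds ((0 : ℝ) : ℂ)) :=
          (Complex.continuous_ofReal.tendsto (0 : ℝ)).comp
            tendsto_one_div_add_atTop_nhds_zero_nat
        simpa using h2
      · refine Filter.Eventually.of_forall fun k => ?_
        simp only [Set.mem_compl_iff, Set.mem_singleton_iff]
        intro hzero
        have h1 : (1 / ((k : ℝ) + 1) : ℝ) = 0 := by exact_mod_cast hzero
        have h2 : (0 : ℝ) < 1 / ((k : ℝ) + 1) := by positivity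
        simp_all
    exact htend.frequently (Filter.Frequently.of_forall fun k => hZ _)
  have hF0 : ∀ z : ℂ, F z = 0 := fun z =>
    hFan.eqOn_zero_of_preconnected_of_frequently_eq_zero isPreconnected_univ
      (Set.mem_univ 0) hfreq (Set.mem_univ z)
  have hHh0 : ∀ w : ℂ, Hh n w = 0 := by
    intro w
    have := hF0 (w / c)
    simpa [hF, mul_div_cancel₀ _ hc0] using this
  have he0 : (e n : ℝ → ℂ) =ᵐ[volume] 0 := by
    filter_upwards [he n] with x hx
    simp [hx, hHh0]
  have hzero : ‖e n‖ = 0 := by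
    have : e n = 0 := by
      ext1
      exact he0.trans (Lp.coeFn_zero _ _ _).symm
    simp [this]
  have h1 : ‖e n‖ = 1 := horth.1 n
  rw [hzero] at h1; norm_num at h1

lemma inner_toLp' {E : Type*} [NormedAddCommGroup E] [InnerProductSpace ℂ E]
    {f g : ℝ → E} (hf : MemLp f 2 volume) (hg : MemLp g 2 volume) :
    (inner ℂ (hf.toLp f) (hg.toLp g) : ℂ) = ∫ x : ℝ, inner ℂ (f x) (g x) := by
  rw [MeasureTheory.L2.inner_def]
  refine integral_congr_ae ?_
  filter_upwards [hf.coeFn_toLp, hg.coeFn_toLp] with x h1 h2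
  rw [h1, h2]

lemma chi_inner_self' (Hh : ℕ → ℂ → ℂ) (θ m : ℝ) (n : ℕ) (j : Fin 4) (x : ℝ) :
    (inner ℂ (chiFun Hh θ m n j x) (chiFun Hh θ m n j x) : ℂ)
      = ((‖vcomp (uVec m n j) 0‖ ^ 2 + ‖vcomp (uVec m n j) 2‖ ^ 2 : ℝ) : ℂ)
          * ((‖phiFun Hh θ n x‖ : ℝ) : ℂ) ^ 2
        + ((‖vcomp (uVec m n j) 1‖ ^ 2 + ‖vcomp (uVec m n j) 3‖ ^ 2 : ℝ) : ℂ)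
          * ((‖phiFun Hh θ (n - 1) x‖ : ℝ) : ℂ) ^ 2 := by
  simp only [chiFun, PiLp.inner_apply, Fin.sum_univ_four, WithLp.equiv_symm_apply, PiLp.toLp_apply,
    RCLike.inner_apply, Matrix.cons_val_zero, Matrix.cons_val_one, Matrix.head_cons,
    Matrix.cons_val_two, Matrix.tail_cons, Matrix.cons_val_three, map_mul]
  have hm : ∀ a b : ℂ, a * b * ((starRingEnd ℂ) a * (starRingEnd ℂ) b)
      = ((‖a‖ ^ 2 * ‖b‖ ^ 2 : ℝ) : ℂ) := by
    intro a b
    have : a * b * ((starRingEnd ℂ) a * (starRingEnd ℂ) b)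
        = ((starRingEnd ℂ) a * a) * ((starRingEnd ℂ) b * b) := by ring
    rw [this, RCLike.conj_mul, RCLike.conj_mul]
    norm_cast
  rw [hm, hm, hm, hm]
  push_cast
  ring

lemma chi_inner_cross' (Hh : ℕ → ℂ → ℂ) (θ m : ℝ) (n : ℕ) (j k : Fin 4)
    (h02 : (starRingEnd ℂ) (vcomp (uVec m n j) 0) * vcomp (uVec m n k) 0
        + (starRingEnd ℂ) (vcomp (uVec m n j) 2) * vcomp (uVec m n k) 2 = 0)
    (h13 : (starRingEnd ℂ) (vcomp (uVec m n j) 1) * vcomp (uVec m n k) 1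
        + (starRingEnd ℂ) (vcomp (uVec m n j) 3) * vcomp (uVec m n k) 3 = 0)
    (x : ℝ) :
    (inner ℂ (chiFun Hh θ m n j x) (chiFun Hh θ m n k x) : ℂ) = 0 := by
  simp only [chiFun, PiLp.inner_apply, Fin.sum_univ_four, WithLp.equiv_symm_apply, PiLp.toLp_apply,
    RCLike.inner_apply, Matrix.cons_val_zero, Matrix.cons_val_one, Matrix.head_cons,
    Matrix.cons_val_two, Matrix.tail_cons, Matrix.cons_val_three, map_mul]
  linear_combination ((starRingEnd ℂ) (phiFun Hh θ n x) * phiFun Hh θ n x) * h02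
    + ((starRingEnd ℂ) (phiFun Hh θ (n - 1) x) * phiFun Hh θ (n - 1) x) * h13

lemma vcomp_uVec' (m : ℝ) (n : ℕ) (j i : Fin 4) :
    vcomp (uVec m n j) i = ((‖vRaw m n j‖ : ℝ) : ℂ)⁻¹ * vcomp (vRaw m n j) i := by
  simp [vcomp, uVec, WithLp.equiv_apply, WithLp.ofLp_smul]

lemma combo_plus' (m : ℝ) (n : ℕ) (i i' : Fin 4) (h : (i = 0 ∧ i' = 2) ∨ (i = 1 ∧ i' = 3)) :
    (starRingEnd ℂ) (vcomp (uVec m n 1) i) * vcomp (uVec m n 0) i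
      + (starRingEnd ℂ) (vcomp (uVec m n 1) i') * vcomp (uVec m n 0) i' = 0 := by
  rcases h with ⟨h1, h2⟩ | ⟨h1, h2⟩ <;> subst h1 <;> subst h2 <;>
  · simp only [vcomp_uVec']
    simp only [vcomp, vRaw, WithLp.equiv_symm_apply, PiLp.toLp_apply, Equiv.apply_symm_apply, WithLp.equiv_apply, WithLp.ofLp_toLp,
      Matrix.cons_val_zero, Matrix.cons_val_one, Matrix.head_cons, Matrix.cons_val_two,
      Matrix.tail_cons, Matrix.cons_val_three, Matrix.cons_val', Matrix.empty_val',
      Matrix.cons_val_fin_one]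
    push_cast
    simp only [map_mul, map_neg, map_add, map_sub, map_inv₀, Complex.conj_ofReal]
    ring

lemma combo_minus' (m : ℝ) (n : ℕ) (i i' : Fin 4) (h : (i = 0 ∧ i' = 2) ∨ (i = 1 ∧ i' = 3)) :
    (starRingEnd ℂ) (vcomp (uVec m n 3) i) * vcomp (uVec m n 2) i
      + (starRingEnd ℂ) (vcomp (uVec m n 3) i') * vcomp (uVec m n 2) i' = 0 := by
  rcases h with ⟨h1, h2⟩ | ⟨h1, h2⟩ <;> subst h1 <;> subst h2 <;>
  · simp only [vcomp_uVec']
    simp only [vcomp, vRaw, WithLp.equiv_symm_apply, PiLp.toLp_apply, Equiv.apply_symm_apply, WithLp.equiv_apply, WithLp.ofLp_toLp,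
      Matrix.cons_val_zero, Matrix.cons_val_one, Matrix.head_cons, Matrix.cons_val_two,
      Matrix.tail_cons, Matrix.cons_val_three, Matrix.cons_val', Matrix.empty_val',
      Matrix.cons_val_fin_one]
    push_cast
    simp only [map_mul, map_neg, map_add, map_sub, map_inv₀, Complex.conj_ofReal]
    ring

lemma phi_sq_integrable' (Hh : ℕ → ℂ → ℂ) (θ : ℝ) (k : ℕ)
    (h : MemLp (phiFun Hh θ k) 2 volume) :
    Integrable (fun x : ℝ => ((‖phiFun Hh θ k x‖ : ℝ) : ℂ) ^ 2) volume := by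
  refine (MeasureTheory.L2.integrable_inner (𝕜 := ℂ) (h.toLp _) (h.toLp _)).congr ?_
  filter_upwards [h.coeFn_toLp] with x hx
  rw [hx, RCLike.inner_apply, RCLike.mul_conj]
  norm_cast

lemma integral_phi_sq' (Hh : ℕ → ℂ → ℂ) (θ : ℝ) (k : ℕ)
    (h : MemLp (phiFun Hh θ k) 2 volume) :
    ∫ x : ℝ, ((‖phiFun Hh θ k x‖ : ℝ) : ℂ) ^ 2
      = ((‖h.toLp (phiFun Hh θ k)‖ : ℝ) : ℂ) ^ 2 := by
  have h1 := inner_toLp' h h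
  have h2 : ∀ x : ℝ, (inner ℂ (phiFun Hh θ k x) (phiFun Hh θ k x) : ℂ)
      = ((‖phiFun Hh θ k x‖ : ℝ) : ℂ) ^ 2 := by
    intro x
    rw [RCLike.inner_apply, RCLike.mul_conj]
    norm_cast
  simp only [h2] at h1
  have h3 := inner_self_eq_norm_sq_to_K (𝕜 := ℂ) (h.toLp (phiFun Hh θ k))
  rw [h3] at h1
  rw [← h1]
  norm_cast

lemma norm_chi_sq' (Hh : ℕ → ℂ → ℂ) (θ m : ℝ) (n : ℕ) (j : Fin 4)
    (hc : MemLp (chiFun Hh θ m n j) 2 volume)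
    (hn : MemLp (phiFun Hh θ n) 2 volume)
    (hn1 : MemLp (phiFun Hh θ (n - 1)) 2 volume) :
    ‖hc.toLp (chiFun Hh θ m n j)‖ ^ 2
      = (‖vcomp (uVec m n j) 0‖ ^ 2 + ‖vcomp (uVec m n j) 2‖ ^ 2)
          * ‖hn.toLp (phiFun Hh θ n)‖ ^ 2
        + (‖vcomp (uVec m n j) 1‖ ^ 2 + ‖vcomp (uVec m n j) 3‖ ^ 2)
          * ‖hn1.toLp (phiFun Hh θ (n - 1))‖ ^ 2 := by
  set A : ℝ := ‖vcomp (uVec m n j) 0‖ ^ 2 + ‖vcomp (uVec m n j) 2‖ ^ 2 with hA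
  set B : ℝ := ‖vcomp (uVec m n j) 1‖ ^ 2 + ‖vcomp (uVec m n j) 3‖ ^ 2 with hB
  have key : (inner ℂ (hc.toLp (chiFun Hh θ m n j)) (hc.toLp (chiFun Hh θ m n j)) : ℂ)
      = (A : ℂ) * ((‖hn.toLp (phiFun Hh θ n)‖ : ℝ) : ℂ) ^ 2
        + (B : ℂ) * ((‖hn1.toLp (phiFun Hh θ (n - 1))‖ : ℝ) : ℂ) ^ 2 := by
    rw [inner_toLp' hc hc]
    have hptw : ∀ x : ℝ, (inner ℂ (chiFun Hh θ m n j x) (chiFun Hh θ m n j x) : ℂ)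
        = (A : ℂ) * ((‖phiFun Hh θ n x‖ : ℝ) : ℂ) ^ 2
          + (B : ℂ) * ((‖phiFun Hh θ (n - 1) x‖ : ℝ) : ℂ) ^ 2 :=
      fun x => chi_inner_self' Hh θ m n j x
    simp only [hptw]
    rw [integral_add ((phi_sq_integrable' Hh θ n hn).const_mul _)
        ((phi_sq_integrable' Hh θ (n - 1) hn1).const_mul _),
      integral_const_mul, integral_const_mul,
      integral_phi_sq' Hh θ n hn, integral_phi_sq' Hh θ (n - 1) hn1]
  have key' : (inner ℂ (hc.toLp (chiFun Hh θ m n j)) (hc.toLp (chiFun Hh θ m n j)) : ℂ)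
      = ((A * ‖hn.toLp (phiFun Hh θ n)‖ ^ 2 + B * ‖hn1.toLp (phiFun Hh θ (n - 1))‖ ^ 2 : ℝ) : ℂ) := by
    rw [key]; push_cast; ring
  rw [norm_sq_eq_re_inner (𝕜 := ℂ), key']
  simp [← Complex.ofReal_pow]

lemma vRaw_norm_pos' (m : ℝ) (n : ℕ) (hn : 1 ≤ n) (j : Fin 4) : 0 < ‖vRaw m n j‖ := by
  have hn' : (1 : ℝ) ≤ (n : ℝ) := by exact_mod_cast hn
  have hs : (0 : ℝ) < Real.sqrt (2 * n) := Real.sqrt_pos.mpr (by linarith)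
  have hss : Real.sqrt (2 * n) ^ 2 = 2 * n := Real.sq_sqrt (by linarith)
  have tac : ∀ j' : Fin 4, (0:ℝ) < ∑ i : Fin 4, ‖(WithLp.equiv 2 (Fin 4 → ℂ)).symm
      (fun i => (WithLp.equiv 2 (Fin 4 → ℂ)) (vRaw m n j') i) i‖ ^ 2 → 0 < ‖vRaw m n j'‖ := by
    intro j' h
    rw [EuclideanSpace.norm_eq]
    refine Real.sqrt_pos.mpr ?_
    convert h using 1
    rfl
  have c0 : 0 < ‖vRaw m n (0 : Fin 4)‖ := by
    refine tac 0 ?_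
    rw [Fin.sum_univ_four]
    simp only [vRaw, WithLp.equiv_symm_apply, PiLp.toLp_apply, Equiv.apply_symm_apply, WithLp.equiv_apply, WithLp.ofLp_toLp, Matrix.cons_val_zero,
      Matrix.cons_val_one, Matrix.head_cons, Matrix.cons_val_two, Matrix.tail_cons,
      Matrix.cons_val_three, Matrix.cons_val', Matrix.empty_val', Matrix.cons_val_fin_one,
      norm_neg, Complex.norm_real, Real.norm_eq_abs, _root_.sq_abs]
    nlinarith [sq_nonneg (Real.sqrt (2 * n + m ^ 2) - m), sq_nonneg (Real.sqrt (2 * n + m ^ 2) + m),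
      sq_nonneg (-Real.sqrt (2 * n + m ^ 2) + m)]
  have c1 : 0 < ‖vRaw m n (1 : Fin 4)‖ := by
    refine tac 1 ?_
    rw [Fin.sum_univ_four]
    simp only [vRaw, WithLp.equiv_symm_apply, PiLp.toLp_apply, Equiv.apply_symm_apply, WithLp.equiv_apply, WithLp.ofLp_toLp, Matrix.cons_val_zero,
      Matrix.cons_val_one, Matrix.head_cons, Matrix.cons_val_two, Matrix.tail_cons,
      Matrix.cons_val_three, Matrix.cons_val', Matrix.empty_val', Matrix.cons_val_fin_one,
      norm_neg, Complex.norm_real, Real.norm_eq_abs, _root_.sq_abs]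
    nlinarith [sq_nonneg (Real.sqrt (2 * n + m ^ 2) - m), sq_nonneg (Real.sqrt (2 * n + m ^ 2) + m),
      sq_nonneg (-Real.sqrt (2 * n + m ^ 2) + m)]
  have c2 : 0 < ‖vRaw m n (2 : Fin 4)‖ := by
    refine tac 2 ?_
    rw [Fin.sum_univ_four]
    simp only [vRaw, WithLp.equiv_symm_apply, PiLp.toLp_apply, Equiv.apply_symm_apply, WithLp.equiv_apply, WithLp.ofLp_toLp, Matrix.cons_val_zero,
      Matrix.cons_val_one, Matrix.head_cons, Matrix.cons_val_two, Matrix.tail_cons,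
      Matrix.cons_val_three, Matrix.cons_val', Matrix.empty_val', Matrix.cons_val_fin_one,
      norm_neg, Complex.norm_real, Real.norm_eq_abs, _root_.sq_abs]
    nlinarith [sq_nonneg (Real.sqrt (2 * n + m ^ 2) - m), sq_nonneg (Real.sqrt (2 * n + m ^ 2) + m),
      sq_nonneg (-Real.sqrt (2 * n + m ^ 2) + m)]
  have c3 : 0 < ‖vRaw m n (3 : Fin 4)‖ := by
    refine tac 3 ?_
    rw [Fin.sum_univ_four]
    simp only [vRaw, WithLp.equiv_symm_apply, PiLp.toLp_apply, Equiv.apply_symm_apply, WithLp.equiv_apply, WithLp.ofLp_toLp, Matrix.cons_val_zero,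
      Matrix.cons_val_one, Matrix.head_cons, Matrix.cons_val_two, Matrix.tail_cons,
      Matrix.cons_val_three, Matrix.cons_val', Matrix.empty_val', Matrix.cons_val_fin_one,
      norm_neg, Complex.norm_real, Real.norm_eq_abs, _root_.sq_abs]
    nlinarith [sq_nonneg (Real.sqrt (2 * n + m ^ 2) - m), sq_nonneg (Real.sqrt (2 * n + m ^ 2) + m),
      sq_nonneg (-Real.sqrt (2 * n + m ^ 2) + m)]
  fin_cases j
  exacts [c0, c1, c2, c3]

lemma uVec_sum_sq' (m : ℝ) (n : ℕ) (hn : 1 ≤ n) (j : Fin 4) :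
    (‖vcomp (uVec m n j) 0‖ ^ 2 + ‖vcomp (uVec m n j) 2‖ ^ 2)
      + (‖vcomp (uVec m n j) 1‖ ^ 2 + ‖vcomp (uVec m n j) 3‖ ^ 2) = 1 := by
  have hr := vRaw_norm_pos' m n hn j
  have hcomp : ∀ i : Fin 4, ‖vcomp (uVec m n j) i‖
      = ‖vRaw m n j‖⁻¹ * ‖vcomp (vRaw m n j) i‖ := by
    intro i
    rw [vcomp_uVec', norm_mul, norm_inv, Complex.norm_real, Real.norm_eq_abs,
      _root_.abs_of_nonneg (norm_nonneg _)]
  have hsum : ‖vcomp (vRaw m n j) 0‖ ^ 2 + ‖vcomp (vRaw m n j) 1‖ ^ 2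
      + ‖vcomp (vRaw m n j) 2‖ ^ 2 + ‖vcomp (vRaw m n j) 3‖ ^ 2 = ‖vRaw m n j‖ ^ 2 := by
    rw [EuclideanSpace.norm_eq, Real.sq_sqrt (by positivity), Fin.sum_univ_four]
    rfl
  simp only [hcomp]
  have h1 : (‖vRaw m n j‖⁻¹ * ‖vcomp (vRaw m n j) 0‖) ^ 2
        + (‖vRaw m n j‖⁻¹ * ‖vcomp (vRaw m n j) 2‖) ^ 2
      + ((‖vRaw m n j‖⁻¹ * ‖vcomp (vRaw m n j) 1‖) ^ 2
        + (‖vRaw m n j‖⁻¹ * ‖vcomp (vRaw m n j) 3‖) ^ 2)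
      = ‖vRaw m n j‖⁻¹ ^ 2 * (‖vcomp (vRaw m n j) 0‖ ^ 2 + ‖vcomp (vRaw m n j) 1‖ ^ 2
        + ‖vcomp (vRaw m n j) 2‖ ^ 2 + ‖vcomp (vRaw m n j) 3‖ ^ 2) := by ring
  rw [h1, hsum]
  field_simp

lemma proj_bounds' {H : Type*} [NormedAddCommGroup H] [InnerProductSpace ℂ H]
    (a b c d : H) (horth : (inner ℂ d c : ℂ) = 0)
    (hca : ‖c‖ = ‖a‖) (hdb : ‖d‖ = ‖b‖) (hpos : 0 < ‖a‖) :
    ‖a‖ ^ 2 ≤ ‖(innerSL ℂ c).smulRight a + (innerSL ℂ d).smulRight b‖ ∧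
      ‖(innerSL ℂ c).smulRight a + (innerSL ℂ d).smulRight b‖ ≤ ‖a‖ ^ 2 + ‖b‖ ^ 2 := by
  set T := (innerSL ℂ c).smulRight a + (innerSL ℂ d).smulRight b with hT
  constructor
  · have happ : T c = (inner ℂ c c : ℂ) • a + (inner ℂ d c : ℂ) • b := by
      simp [hT, ContinuousLinearMap.add_apply, ContinuousLinearMap.smulRight_apply]
    rw [horth, zero_smul, add_zero, inner_self_eq_norm_sq_to_K] at happ
    have hTc : ‖T c‖ = ‖c‖ ^ 2 * ‖a‖ := by
      rw [happ, norm_smul]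
      congr 1
      rw [norm_pow, RCLike.norm_ofReal, _root_.abs_of_nonneg (norm_nonneg _)]
    have hle := T.ratio_le_opNorm c
    have hc0 : 0 < ‖c‖ := hca ▸ hpos
    calc ‖a‖ ^ 2 = ‖T c‖ / ‖c‖ := by
          rw [hTc, hca]
          field_simp
      _ ≤ ‖T‖ := hle
  · calc ‖T‖ ≤ ‖(innerSL ℂ c).smulRight a‖ + ‖(innerSL ℂ d).smulRight b‖ := norm_add_le _ _
      _ = ‖c‖ * ‖a‖ + ‖d‖ * ‖b‖ := by
          rw [ContinuousLinearMap.norm_smulRight_apply, ContinuousLinearMap.norm_smulRight_apply,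
            innerSL_apply_norm, innerSL_apply_norm]
      _ = ‖a‖ ^ 2 + ‖b‖ ^ 2 := by rw [hca, hdb]; ring

lemma tendsto_log_of_bounds' (S N : ℕ → ℝ) (L : ℝ)
    (hNpos : ∀ k, 0 < N k)
    (hlow : ∀ n : ℕ, 1 ≤ n → min (N n) (N (n - 1)) ≤ S n)
    (hup : ∀ n : ℕ, 1 ≤ n → S n ≤ 2 * max (N n) (N (n - 1)))
    (hasym : Filter.Tendsto (fun n : ℕ => Real.log (N n) / n) Filter.atTop (nhds L)) :
    Filter.Tendsto (fun n : ℕ => Real.log (S n) / n) Filter.atTop (nhds L) := by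
  have hg' : Filter.Tendsto (fun n : ℕ => Real.log (N (n - 1)) / n) Filter.atTop (nhds L) := by
    have h1 : Filter.Tendsto (fun n : ℕ => Real.log (N (n - 1)) / ((n - 1 : ℕ) : ℝ))
        Filter.atTop (nhds L) := hasym.comp (Filter.tendsto_sub_atTop_nat 1)
    have hinv : Filter.Tendsto (fun n : ℕ => 1 / (n : ℝ)) Filter.atTop (nhds 0) :=
      tendsto_const_div_atTop_nhds_zero_nat 1
    have h2 : Filter.Tendsto (fun n : ℕ => (((n - 1 : ℕ) : ℝ) / (n : ℝ))) Filter.atTop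
        (nhds 1) := by
      have h3 : Filter.Tendsto (fun n : ℕ => 1 - 1 / (n : ℝ)) Filter.atTop (nhds (1 - 0)) :=
        tendsto_const_nhds.sub hinv
      rw [sub_zero] at h3
      refine h3.congr' ?_
      filter_upwards [Filter.eventually_ge_atTop 1] with k hk
      have hk0 : (0 : ℝ) < (k : ℝ) := by exact_mod_cast hk
      rw [Nat.cast_sub hk]
      field_simp
      norm_num
    have h4 := h1.mul h2
    rw [mul_one] at h4
    refine h4.congr' ?_
    filter_upwards [Filter.eventually_ge_atTop 2] with k hk
    have hk1 : ((k - 1 : ℕ) : ℝ) ≠ 0 := by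
      have : 1 ≤ k - 1 := by omega
      have : (1 : ℝ) ≤ ((k - 1 : ℕ) : ℝ) := by exact_mod_cast this
      linarith
    rw [div_mul_div_comm, mul_comm (Real.log (N (k - 1))) (((k - 1 : ℕ) : ℝ)),
      mul_div_mul_left _ _ hk1]
  have hmin : Filter.Tendsto (fun n : ℕ => min (Real.log (N n) / n) (Real.log (N (n - 1)) / n))
      Filter.atTop (nhds L) := by simpa using hasym.min hg'
  have hmax0 : Filter.Tendsto (fun n : ℕ =>
      Real.log 2 / n + max (Real.log (N n) / n) (Real.log (N (n - 1)) / n))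
      Filter.atTop (nhds (0 + L)) :=
    (tendsto_const_div_atTop_nhds_zero_nat (Real.log 2)).add (by simpa using hasym.max hg')
  rw [zero_add] at hmax0
  refine tendsto_of_tendsto_of_tendsto_of_le_of_le' hmin hmax0 ?_ ?_
  · filter_upwards [Filter.eventually_ge_atTop 1] with k hk
    have hk0 : (0 : ℝ) < (k : ℝ) := by exact_mod_cast hk
    have hminpos : 0 < min (N k) (N (k - 1)) := lt_min (hNpos k) (hNpos (k - 1))
    have hlog : min (Real.log (N k)) (Real.log (N (k - 1))) ≤ Real.log (S k) := by
      rcases le_total (N k) (N (k - 1)) with h | h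
      · calc min (Real.log (N k)) (Real.log (N (k - 1))) ≤ Real.log (N k) := min_le_left _ _
          _ ≤ Real.log (S k) := Real.log_le_log (hNpos k)
            (le_trans (by rw [min_eq_left h]) (hlow k hk))
      · calc min (Real.log (N k)) (Real.log (N (k - 1))) ≤ Real.log (N (k - 1)) := min_le_right _ _
          _ ≤ Real.log (S k) := Real.log_le_log (hNpos (k - 1))
            (le_trans (by rw [min_eq_right h]) (hlow k hk))
    rw [min_div_div_right hk0.le]
    exact div_le_div_of_nonneg_right hlog hk0.le
  · filter_upwards [Filter.eventually_ge_atTop 1] with k hk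
    have hk0 : (0 : ℝ) < (k : ℝ) := by exact_mod_cast hk
    have hSpos : 0 < S k := lt_of_lt_of_le (lt_min (hNpos k) (hNpos (k - 1))) (hlow k hk)
    have hmaxpos : 0 < max (N k) (N (k - 1)) := lt_max_of_lt_left (hNpos k)
    have hlog : Real.log (S k) ≤ Real.log 2 + max (Real.log (N k)) (Real.log (N (k - 1))) := by
      have h1 : Real.log (S k) ≤ Real.log (2 * max (N k) (N (k - 1))) :=
        Real.log_le_log hSpos (hup k hk)
      rw [Real.log_mul (by norm_num) (ne_of_gt hmaxpos)] at h1
      refine h1.trans (add_le_add_right ?_ _)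
      rcases le_total (N k) (N (k - 1)) with h | h
      · rw [max_eq_right h]; exact le_max_right _ _
      · rw [max_eq_left h]; exact le_max_left _ _
    rw [max_div_div_right hk0.le, ← add_div]
    exact div_le_div_of_nonneg_right hlog hk0.le

lemma convex_bounds' (A B Nn Nm : ℝ) (hA : 0 ≤ A) (hB : 0 ≤ B) (hAB : A + B = 1)
    (hn : 0 < Nn) (hm : 0 < Nm) :
    min Nn Nm ≤ A * Nn + B * Nm ∧ A * Nn + B * Nm ≤ max Nn Nm := by
  constructor
  · nlinarith [mul_nonneg hA (sub_nonneg.2 (min_le_left Nn Nm)),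
      mul_nonneg hB (sub_nonneg.2 (min_le_right Nn Nm)), min_le_left Nn Nm]
  · nlinarith [mul_nonneg hA (sub_nonneg.2 (le_max_left Nn Nm)),
      mul_nonneg hB (sub_nonneg.2 (le_max_right Nn Nm)), le_max_left Nn Nm]


/-- for both signs, `lim_{n→∞} (log‖P_n^±‖)/n = log√((1+|sin θ|)/(1-|sin θ|))`; in particular, for `θ ≠ 0` the norms of the spectral projectors grow exponentially. -/
theorem tendsto_log_Pproj (θ m : ℝ)
    (hθ : θ ∈ Set.Ioo (-(Real.pi / 2)) (Real.pi / 2)) (hm : 0 ≤ m)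
    (Hh : ℕ → ℂ → ℂ) (hent : ∀ n, Differentiable ℂ (Hh n))
    (hODE : ∀ (n : ℕ) (t : ℂ),
      -(deriv (deriv (Hh n)) t) + t ^ 2 * Hh n t = (2 * (n : ℂ) + 1) * Hh n t)
    (e : ℕ → Lp ℂ 2 (volume : Measure ℝ))
    (he : ∀ n, (e n : ℝ → ℂ) =ᵐ[volume] fun x : ℝ => Hh n (x : ℂ))
    (horth : Orthonormal ℂ e)
    (hcomp : (Submodule.span ℂ (Set.range e)).topologicalClosure = ⊤)
    (hχ : ∀ (n : ℕ) (j : Fin 4), MemLp (chiFun Hh θ m n j) 2 volume)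
    (hχt : ∀ (n : ℕ) (j : Fin 4), MemLp (chiFun Hh (-θ) m n j) 2 volume)
    (hmem : ∀ n : ℕ, MemLp (phiFun Hh θ n) 2 volume)
    (hmemt : ∀ n : ℕ, MemLp (phiFun Hh (-θ) n) 2 volume)
    (hnorm : ∀ n : ℕ, ‖(hmem n).toLp (phiFun Hh θ n)‖ = ‖(hmemt n).toLp (phiFun Hh (-θ) n)‖)
    (hasym : Filter.Tendsto (fun n : ℕ => Real.log (‖(hmem n).toLp (phiFun Hh θ n)‖ ^ 2) / n)
      Filter.atTop
      (nhds (Real.log (Real.sqrt ((1 + |Real.sin θ|) / (1 - |Real.sin θ|))))))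
    :
    Filter.Tendsto (fun n : ℕ => Real.log ‖Pplus Hh θ m hχ hχt n‖ / n) Filter.atTop
      (nhds (Real.log (Real.sqrt ((1 + |Real.sin θ|) / (1 - |Real.sin θ|))))) ∧
    Filter.Tendsto (fun n : ℕ => Real.log ‖Pminus Hh θ m hχ hχt n‖ / n) Filter.atTop
      (nhds (Real.log (Real.sqrt ((1 + |Real.sin θ|) / (1 - |Real.sin θ|))))) ∧
    (θ ≠ 0 → ∃ c : ℝ, 1 < c ∧ ∀ᶠ n : ℕ in Filter.atTop,
      c ^ n ≤ ‖Pplus Hh θ m hχ hχt n‖ ∧ c ^ n ≤ ‖Pminus Hh θ m hχ hχt n‖) := by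
  set L := Real.log (Real.sqrt ((1 + |Real.sin θ|) / (1 - |Real.sin θ|))) with hLdef
  set N : ℕ → ℝ := fun k => ‖(hmem k).toLp (phiFun Hh θ k)‖ ^ 2 with hNdef
  have hNpos : ∀ k, 0 < N k := fun k =>
    pow_pos (phi_norm_pos' Hh hent e he horth θ k (hmem k)) 2
  have hNt : ∀ k, ‖(hmemt k).toLp (phiFun Hh (-θ) k)‖ ^ 2 = N k := fun k => by
    rw [hNdef, ← hnorm k]
  have hchiθ : ∀ (n : ℕ) (j : Fin 4), ‖((hχ n j).toLp (chiFun Hh θ m n j))‖ ^ 2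
      = (‖vcomp (uVec m n j) 0‖ ^ 2 + ‖vcomp (uVec m n j) 2‖ ^ 2) * N n
        + (‖vcomp (uVec m n j) 1‖ ^ 2 + ‖vcomp (uVec m n j) 3‖ ^ 2) * N (n - 1) :=
    fun n j => norm_chi_sq' Hh θ m n j (hχ n j) (hmem n) (hmem (n - 1))
  have hchit : ∀ (n : ℕ) (j : Fin 4), ‖((hχt n j).toLp (chiFun Hh (-θ) m n j))‖ ^ 2
      = (‖vcomp (uVec m n j) 0‖ ^ 2 + ‖vcomp (uVec m n j) 2‖ ^ 2) * N n
        + (‖vcomp (uVec m n j) 1‖ ^ 2 + ‖vcomp (uVec m n j) 3‖ ^ 2) * N (n - 1) := fun n j => by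
    rw [norm_chi_sq' Hh (-θ) m n j (hχt n j) (hmemt n) (hmemt (n - 1)), hNt, hNt]
  have hne : ∀ (n : ℕ) (j : Fin 4),
      ‖((hχt n j).toLp (chiFun Hh (-θ) m n j))‖ = ‖((hχ n j).toLp (chiFun Hh θ m n j))‖ := by
    intro n j
    have h := (hchit n j).trans (hchiθ n j).symm
    have h2 := congrArg Real.sqrt h
    rwa [Real.sqrt_sq (norm_nonneg _), Real.sqrt_sq (norm_nonneg _)] at h2
  have horthP : ∀ n : ℕ, (inner ℂ ((hχt n 1).toLp (chiFun Hh (-θ) m n 1))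
      ((hχt n 0).toLp (chiFun Hh (-θ) m n 0)) : ℂ) = 0 := by
    intro n
    rw [inner_toLp' (hχt n 1) (hχt n 0)]
    have hz : ∀ x : ℝ, (inner ℂ (chiFun Hh (-θ) m n 1 x) (chiFun Hh (-θ) m n 0 x) : ℂ) = 0 :=
      fun x => chi_inner_cross' Hh (-θ) m n 1 0
        (combo_plus' m n 0 2 (Or.inl ⟨rfl, rfl⟩)) (combo_plus' m n 1 3 (Or.inr ⟨rfl, rfl⟩)) x
    simp [hz]
  have horthM : ∀ n : ℕ, (inner ℂ ((hχt n 3).toLp (chiFun Hh (-θ) m n 3))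
      ((hχt n 2).toLp (chiFun Hh (-θ) m n 2)) : ℂ) = 0 := by
    intro n
    rw [inner_toLp' (hχt n 3) (hχt n 2)]
    have hz : ∀ x : ℝ, (inner ℂ (chiFun Hh (-θ) m n 3 x) (chiFun Hh (-θ) m n 2 x) : ℂ) = 0 :=
      fun x => chi_inner_cross' Hh (-θ) m n 3 2
        (combo_minus' m n 0 2 (Or.inl ⟨rfl, rfl⟩)) (combo_minus' m n 1 3 (Or.inr ⟨rfl, rfl⟩)) x
    simp [hz]
  have hcb : ∀ (n : ℕ), 1 ≤ n → ∀ j : Fin 4,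
      min (N n) (N (n - 1)) ≤ ‖((hχ n j).toLp (chiFun Hh θ m n j))‖ ^ 2 ∧
        ‖((hχ n j).toLp (chiFun Hh θ m n j))‖ ^ 2 ≤ max (N n) (N (n - 1)) := by
    intro n hn j
    rw [hchiθ n j]
    exact convex_bounds' _ _ _ _ (by positivity) (by positivity) (uVec_sum_sq' m n hn j)
      (hNpos n) (hNpos (n - 1))
  have hposχ : ∀ (n : ℕ), 1 ≤ n → ∀ j : Fin 4,
      0 < ‖((hχ n j).toLp (chiFun Hh θ m n j))‖ := by
    intro n hn j
    have hsq : 0 < ‖((hχ n j).toLp (chiFun Hh θ m n j))‖ ^ 2 :=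
      lt_of_lt_of_le (lt_min (hNpos n) (hNpos (n - 1))) (hcb n hn j).1
    rcases (norm_nonneg ((hχ n j).toLp (chiFun Hh θ m n j))).lt_or_eq with h | h
    · exact h
    · exfalso; rw [← h] at hsq; simp at hsq
  have hboundP : ∀ n : ℕ, 1 ≤ n →
      min (N n) (N (n - 1)) ≤ ‖Pplus Hh θ m hχ hχt n‖ ∧
        ‖Pplus Hh θ m hχ hχt n‖ ≤ 2 * max (N n) (N (n - 1)) := by
    intro n hn
    have hb := proj_bounds' ((hχ n 0).toLp (chiFun Hh θ m n 0))
      ((hχ n 1).toLp (chiFun Hh θ m n 1)) ((hχt n 0).toLp (chiFun Hh (-θ) m n 0))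
      ((hχt n 1).toLp (chiFun Hh (-θ) m n 1))
      (horthP n) (hne n 0) (hne n 1) (hposχ n hn 0)
    have hPd : Pplus Hh θ m hχ hχt n
        = (innerSL ℂ ((hχt n 0).toLp (chiFun Hh (-θ) m n 0))).smulRight
            ((hχ n 0).toLp (chiFun Hh θ m n 0))
          + (innerSL ℂ ((hχt n 1).toLp (chiFun Hh (-θ) m n 1))).smulRight
            ((hχ n 1).toLp (chiFun Hh θ m n 1)) := rfl
    rw [hPd]
    constructor
    · exact le_trans (hcb n hn 0).1 hb.1
    · refine le_trans hb.2 ?_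
      have h0 := (hcb n hn 0).2
      have h1 := (hcb n hn 1).2
      linarith
  have hboundM : ∀ n : ℕ, 1 ≤ n →
      min (N n) (N (n - 1)) ≤ ‖Pminus Hh θ m hχ hχt n‖ ∧
        ‖Pminus Hh θ m hχ hχt n‖ ≤ 2 * max (N n) (N (n - 1)) := by
    intro n hn
    have hb := proj_bounds' ((hχ n 2).toLp (chiFun Hh θ m n 2))
      ((hχ n 3).toLp (chiFun Hh θ m n 3)) ((hχt n 2).toLp (chiFun Hh (-θ) m n 2))
      ((hχt n 3).toLp (chiFun Hh (-θ) m n 3))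
      (horthM n) (hne n 2) (hne n 3) (hposχ n hn 2)
    have hPd : Pminus Hh θ m hχ hχt n
        = (innerSL ℂ ((hχt n 2).toLp (chiFun Hh (-θ) m n 2))).smulRight
            ((hχ n 2).toLp (chiFun Hh θ m n 2))
          + (innerSL ℂ ((hχt n 3).toLp (chiFun Hh (-θ) m n 3))).smulRight
            ((hχ n 3).toLp (chiFun Hh θ m n 3)) := rfl
    rw [hPd]
    constructor
    · exact le_trans (hcb n hn 2).1 hb.1
    · refine le_trans hb.2 ?_
      have h2 := (hcb n hn 2).2
      have h3 := (hcb n hn 3).2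
      linarith
  have tP : Filter.Tendsto (fun n : ℕ => Real.log ‖Pplus Hh θ m hχ hχt n‖ / n)
      Filter.atTop (nhds L) :=
    tendsto_log_of_bounds' (fun n => ‖Pplus Hh θ m hχ hχt n‖) N L hNpos
      (fun n hn => (hboundP n hn).1) (fun n hn => (hboundP n hn).2) hasym
  have tM : Filter.Tendsto (fun n : ℕ => Real.log ‖Pminus Hh θ m hχ hχt n‖ / n)
      Filter.atTop (nhds L) :=
    tendsto_log_of_bounds' (fun n => ‖Pminus Hh θ m hχ hχt n‖) N L hNpos
      (fun n hn => (hboundM n hn).1) (fun n hn => (hboundM n hn).2) hasym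
  refine ⟨tP, tM, ?_⟩
  intro hθ0
  have hpi := Real.pi_pos
  have hcos : 0 < Real.cos θ := Real.cos_pos_of_mem_Ioo hθ
  have hsin : Real.sin θ ≠ 0 := by
    intro h
    exact hθ0 ((Real.sin_eq_zero_iff_of_lt_of_lt (by linarith [hθ.1]) (by linarith [hθ.2])).1 h)
  have hs0 : 0 < |Real.sin θ| := abs_pos.2 hsin
  have hs1 : |Real.sin θ| < 1 := by
    have hsc := Real.sin_sq_add_cos_sq θ
    have habs : |Real.sin θ| ^ 2 = Real.sin θ ^ 2 := sq_abs _
    nlinarith [abs_nonneg (Real.sin θ)]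
  have hL : 0 < L := by
    rw [hLdef]
    apply Real.log_pos
    refine (Real.lt_sqrt (by norm_num)).2 ?_
    rw [one_pow, lt_div_iff₀ (by linarith)]
    linarith
  refine ⟨Real.exp (L / 2), ?_, ?_⟩
  · calc (1 : ℝ) = Real.exp 0 := by simp
      _ < Real.exp (L / 2) := Real.exp_lt_exp.2 (by linarith)
  · have hhalf : L / 2 < L := by linarith
    have e1 := tP.eventually (eventually_gt_nhds hhalf)
    have e2 := tM.eventually (eventually_gt_nhds hhalf)
    filter_upwards [e1, e2, Filter.eventually_ge_atTop 1] with n h1 h2 hn1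
    have hn0 : (0 : ℝ) < (n : ℝ) := by exact_mod_cast hn1
    have hminpos : 0 < min (N n) (N (n - 1)) := lt_min (hNpos n) (hNpos (n - 1))
    constructor
    · have hSpos : 0 < ‖Pplus Hh θ m hχ hχt n‖ :=
        lt_of_lt_of_le hminpos (hboundP n hn1).1
      have h3 : L / 2 * n < Real.log ‖Pplus Hh θ m hχ hχt n‖ := (lt_div_iff₀ hn0).1 h1
      calc Real.exp (L / 2) ^ n = Real.exp ((n : ℝ) * (L / 2)) := (Real.exp_nat_mul _ n).symm
        _ ≤ ‖Pplus Hh θ m hχ hχt n‖ := by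
            rw [← Real.exp_log hSpos]
            exact Real.exp_le_exp.2 (by linarith)
    · have hSpos : 0 < ‖Pminus Hh θ m hχ hχt n‖ :=
        lt_of_lt_of_le hminpos (hboundM n hn1).1
      have h3 : L / 2 * n < Real.log ‖Pminus Hh θ m hχ hχt n‖ := (lt_div_iff₀ hn0).1 h2
      calc Real.exp (L / 2) ^ n = Real.exp ((n : ℝ) * (L / 2)) := (Real.exp_nat_mul _ n).symm
        _ ≤ ‖Pminus Hh θ m hχ hχt n‖ := by
            rw [← Real.exp_log hSpos]
            exact Real.exp_le_exp.2 (by linarith)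
end
end
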